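/- arXiv:2305.12135 — 5 statements merged into one kernel-verified Lean document; each statement's English description precedes it below -/
import Mathlib

section
/- Let (p, D, L) be a Hadamard triple on ℝ with p > 1, 0 ∈ D ⊂ ℕ, and 0 ∈ L ⊂ {0, 1, …, p−1}. Then (p, D) satisfies the Double Points Condition (i.e. T_{p,D} = [0,1)) if and only if p > #D. -/
open MeasureTheory Filter Topology Set

noncomputable section

/-- Fourier transform `μ̂(ξ) = ∫ e^{2πixξ} dμ(x)` of a Borel measure on `ℝ`. -/
def ftR (μ : Measure ℝ) (ξ : ℝ) : ℂ :=
  ∫ x, Complex.exp (2 * Real.pi * Complex.I * x * ξ) ∂μ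

/-- `δ̂_D(ξ) = (1/#D) Σ_{d∈D} e^{2πi d ξ}` for a finite digit set `D ⊂ ℤ`. -/
def dHat (D : Finset ℤ) (ξ : ℝ) : ℂ :=
  (D.card : ℂ)⁻¹ * ∑ d ∈ D, Complex.exp (2 * Real.pi * Complex.I * (d : ℝ) * ξ)

/-- `(p, D, L)` is a Hadamard triple on `ℝ`. -/
def IsHadamardTriple (p : ℕ) (D L : Finset ℤ) : Prop :=
  1 < p ∧ D.card = L.card ∧
    ∀ ℓ ∈ L, ∀ ℓ' ∈ L, ℓ ≠ ℓ' →
      ∑ d ∈ D, Complex.exp (2 * Real.pi * Complex.I * (((ℓ - ℓ') * d : ℤ) : ℝ) / (p : ℝ)) = 0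

/-- `p_1 ⋯ p_n` (`p` is 0-indexed, so this is `p 0 * ⋯ * p (n-1)`). -/
def Pprod (p : ℕ → ℕ) (n : ℕ) : ℝ := ∏ i ∈ Finset.range n, (p i : ℝ)

/-- `μ` is the Cantor–Moran measure of `{(p_n, D_n)}`: it is a probability measure whose
Fourier transform is `μ̂(ξ) = ∏_{j=1}^∞ δ̂_{D_j}(ξ/(p_1⋯p_j))`. -/
def IsMoran (p : ℕ → ℕ) (D : ℕ → Finset ℤ) (μ : Measure ℝ) : Prop :=
  IsProbabilityMeasure μ ∧
    ∀ ξ : ℝ, ftR μ ξ = ∏' j : ℕ, dHat (D j) (ξ / Pprod p (j + 1))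

/-- `ν` is the `n`-th tail measure `ν_n`:  a probability measure with Fourier transform
`ν̂_n(ξ) = ∏_{j=1}^∞ δ̂_{D_{n+j}}(ξ/(p_{n+1}⋯p_{n+j}))` (0-indexed here). -/
def IsTail (p : ℕ → ℕ) (D : ℕ → Finset ℤ) (n : ℕ) (ν : Measure ℝ) : Prop :=
  IsProbabilityMeasure ν ∧
    ∀ ξ : ℝ, ftR ν ξ =
      ∏' j : ℕ, dHat (D (n + j)) (ξ / ∏ i ∈ Finset.Ico n (n + j + 1), (p i : ℝ))

/-- The Double Points Condition Set `T_{p,D} ⊆ [0,1)`. -/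
def DPCS (p : ℕ) (D : Finset ℤ) : Set ℝ :=
  {ξ | ξ ∈ Set.Ico (0 : ℝ) 1 ∧ ∃ ℓ₁ ℓ₂ : ℕ, ℓ₁ < p ∧ ℓ₂ < p ∧ ℓ₁ ≠ ℓ₂ ∧
    dHat D ((ξ + ℓ₁) / p) ≠ 0 ∧ dHat D ((ξ + ℓ₂) / p) ≠ 0}

/-- A sequence of measures on `ℝ` is an equi-positive family. -/
def EquiPositive (ν : ℕ → Measure ℝ) : Prop :=
  ∃ ε > 0, ∀ x ∈ Set.Ico (0 : ℝ) 1, ∀ k : ℕ, ∃ m : ℤ,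
    ε < ‖ftR (ν k) (x + m)‖

/-- The exponential `x ↦ e^{2πiλx}`. -/
def expL (lam : ℝ) : ℝ → ℂ := fun x => Complex.exp (2 * Real.pi * Complex.I * lam * x)

/-- `Λ` is a spectrum of `μ`: the exponentials `{e^{2πiλx} : λ ∈ Λ}` form an orthonormal
basis (orthonormal with dense span) of `L²(μ)`. -/
def IsSpectrum (μ : Measure ℝ) (Λ : Set ℝ) : Prop :=
  Λ.Countable ∧
    ∃ h : ∀ lam : Λ, MemLp (expL lam) 2 μ,
      Orthonormal ℂ (fun lam : Λ => (h lam).toLp (expL lam)) ∧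
      (Submodule.span ℂ
        (Set.range fun lam : Λ => (h lam).toLp (expL lam))).topologicalClosure = ⊤

/-- `μ` is a spectral measure. -/
def IsSpectralMeasure (μ : Measure ℝ) : Prop := ∃ Λ : Set ℝ, IsSpectrum μ Λ

/-- The integral periodic zero set `Z(μ) = {ξ ∈ [0,1) : μ̂(ξ+k) = 0 ∀ k ∈ ℤ}`. -/
def ZR (μ : Measure ℝ) : Set ℝ :=
  {ξ | ξ ∈ Set.Ico (0 : ℝ) 1 ∧ ∀ k : ℤ, ftR μ (ξ + k) = 0}

/-- Weak convergence of measures on `ℝ` (tested against continuous functions with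
compact support). -/
def WeakConvR (μn : ℕ → Measure ℝ) (μ : Measure ℝ) : Prop :=
  ∀ f : C(ℝ, ℝ), HasCompactSupport f →
    Tendsto (fun n => ∫ x, f x ∂(μn n)) atTop (nhds (∫ x, f x ∂μ))

end

section Statement3Aux

private lemma exp_one_of_dvd' {p : ℕ} (hp : 0 < p) {k : ℤ} (h : (p:ℤ) ∣ k) :
    Complex.exp (2 * Real.pi * Complex.I * (k:ℂ) / (p:ℂ)) = 1 := by
  obtain ⟨t, rfl⟩ := h
  have hp' : (p:ℂ) ≠ 0 := Nat.cast_ne_zero.mpr hp.ne'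
  have h1 : (2 * (Real.pi:ℂ) * Complex.I * (((p:ℤ) * t : ℤ):ℂ) / (p:ℂ))
      = (t:ℂ) * (2 * Real.pi * Complex.I) := by
    push_cast; field_simp
  rw [h1, Complex.exp_int_mul_two_pi_mul_I]

private lemma sum_exp_geom' {p : ℕ} (hp : 0 < p) {k : ℤ} (h : ¬ (p:ℤ) ∣ k) :
    ∑ ℓ ∈ Finset.range p, Complex.exp (2 * Real.pi * Complex.I * (k:ℂ) * (ℓ:ℂ) / (p:ℂ)) = 0 := by
  set z : ℂ := Complex.exp (2 * Real.pi * Complex.I * (k:ℂ) / (p:ℂ)) with hz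
  have hp' : (p:ℂ) ≠ 0 := Nat.cast_ne_zero.mpr hp.ne'
  have hz1 : z ≠ 1 := by
    intro he
    rw [Complex.exp_eq_one_iff] at he
    obtain ⟨n, hn⟩ := he
    apply h
    refine ⟨n, ?_⟩
    have h2 : (2 * (Real.pi:ℂ) * Complex.I) ≠ 0 := by
      simp [Real.pi_ne_zero, Complex.I_ne_zero]
    have h3 : (k:ℂ) = (p:ℂ) * n := by
      field_simp at hn
      have h4 : (2 * (Real.pi:ℂ) * Complex.I) * (k:ℂ)
          = (2 * (Real.pi:ℂ) * Complex.I) * ((p:ℂ) * n) := by rw [hn]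
      exact mul_left_cancel₀ h2 h4
    exact_mod_cast h3
  have hterm : ∀ ℓ : ℕ, Complex.exp (2 * Real.pi * Complex.I * (k:ℂ) * (ℓ:ℂ) / (p:ℂ)) = z ^ ℓ := by
    intro ℓ
    rw [hz, ← Complex.exp_nat_mul]
    congr 1
    ring
  simp only [hterm]
  rw [geom_sum_eq hz1]
  have hzp : z ^ p = 1 := by
    rw [hz, ← Complex.exp_nat_mul]
    have harg : (p:ℂ) * (2 * Real.pi * Complex.I * (k:ℂ) / (p:ℂ))
        = (k:ℂ) * (2 * Real.pi * Complex.I) := by field_simp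
    rw [harg, Complex.exp_int_mul_two_pi_mul_I]
  rw [hzp]
  simp

private lemma abs_dHat_le_one' (D : Finset ℤ) (ξ : ℝ) :
    ‖dHat D ξ‖ ≤ 1 := by
  rw [dHat]
  rcases Finset.eq_empty_or_nonempty D with rfl | hne
  · simp
  have hc : 0 < D.card := Finset.card_pos.mpr hne
  rw [norm_mul]
  have h1 : ‖((D.card : ℂ)⁻¹)‖ = (D.card : ℝ)⁻¹ := by
    rw [norm_inv]; simp
  rw [h1]
  have habs : ∀ d : ℤ, ‖Complex.exp (2 * Real.pi * Complex.I * (d : ℝ) * ξ)‖ = 1 := by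
    intro d
    have h : (2 * (Real.pi:ℂ) * Complex.I * ((d:ℝ):ℂ) * (ξ:ℂ))
        = ((2 * Real.pi * d * ξ : ℝ):ℂ) * Complex.I := by push_cast; ring
    rw [h, Complex.norm_exp_ofReal_mul_I]
  have h2 : ‖∑ d ∈ D, Complex.exp (2 * Real.pi * Complex.I * (d : ℝ) * ξ)‖
      ≤ D.card := by
    calc ‖∑ d ∈ D, Complex.exp (2 * Real.pi * Complex.I * (d : ℝ) * ξ)‖
        ≤ ∑ d ∈ D, ‖Complex.exp (2 * Real.pi * Complex.I * (d : ℝ) * ξ)‖ :=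
          norm_sum_le _ _
      _ = D.card := by simp only [habs]; simp
  calc (D.card:ℝ)⁻¹ * ‖∑ d ∈ D, Complex.exp (2 * Real.pi * Complex.I * (d : ℝ) * ξ)‖
      ≤ (D.card:ℝ)⁻¹ * D.card := mul_le_mul_of_nonneg_left h2 (by positivity)
    _ = 1 := by field_simp

private lemma sep_of_hadamard' {p : ℕ} {D L : Finset ℤ} (hHad : IsHadamardTriple p D L)
    {d d' : ℤ} (hd : d ∈ D) (hd' : d' ∈ D) (hdvd : (p:ℤ) ∣ d - d') : d = d' := by
  classical
  by_contra hne
  obtain ⟨hp1, hcard, hOrth⟩ := hHad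
  have hp : 0 < p := by omega
  have hDne : D.Nonempty := ⟨d, hd⟩
  have hn0 : (D.card : ℂ) ≠ 0 := by
    simp [Finset.card_ne_zero.mpr hDne]
  set n := D.card with hn
  set U : Matrix {ℓ // ℓ ∈ L} {x // x ∈ D} ℂ :=
    Matrix.of fun ℓ x => Complex.exp (2 * Real.pi * Complex.I * ((ℓ.1 * x.1 : ℤ):ℂ) / (p:ℂ)) with hU
  set V : Matrix {x // x ∈ D} {ℓ // ℓ ∈ L} ℂ :=
    Matrix.of fun x ℓ =>
      (n:ℂ)⁻¹ * Complex.exp (2 * Real.pi * Complex.I * ((-(ℓ.1 * x.1) : ℤ):ℂ) / (p:ℂ)) with hV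
  have hUV : U * V = 1 := by
    ext i j
    rw [Matrix.mul_apply]
    have hterm : ∀ k : {x // x ∈ D},
        U i k * V k j = (n:ℂ)⁻¹ *
          Complex.exp (2 * Real.pi * Complex.I * (((i.1 - j.1) * k.1 : ℤ):ℂ) / (p:ℂ)) := by
      intro k
      rw [hU, hV]
      simp only [Matrix.of_apply]
      rw [mul_left_comm, ← Complex.exp_add]
      congr 2
      have hp' : (p:ℂ) ≠ 0 := Nat.cast_ne_zero.mpr hp.ne'
      push_cast
      field_simp
      ring
    rw [Finset.sum_congr rfl (fun k _ => hterm k), ← Finset.mul_sum]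
    by_cases hij : i = j
    · subst hij
      have hone : ∀ k : {x // x ∈ D},
          Complex.exp (2 * Real.pi * Complex.I * (((i.1 - i.1) * k.1 : ℤ):ℂ) / (p:ℂ)) = 1 := by
        intro k; simp
      rw [Finset.sum_congr rfl (fun k _ => hone k)]
      simp [Matrix.one_apply_eq, Finset.card_univ, Fintype.card_coe, hn0]
      rw [← hn]; exact inv_mul_cancel₀ hn0
    · have hij' : i.1 ≠ j.1 := fun h => hij (Subtype.ext h)
      have h0 := hOrth i.1 i.2 j.1 j.2 hij'
      have hsum : ∑ k : {x // x ∈ D},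
          Complex.exp (2 * Real.pi * Complex.I * (((i.1 - j.1) * k.1 : ℤ):ℂ) / (p:ℂ)) = 0 := by
        rw [Finset.sum_coe_sort D
          (fun x => Complex.exp (2 * Real.pi * Complex.I * (((i.1 - j.1) * x : ℤ):ℂ) / (p:ℂ)))]
        rw [← h0]
        apply Finset.sum_congr rfl
        intro x _
        norm_cast
      rw [hsum, mul_zero, Matrix.one_apply_ne hij]
  have ecard : Fintype.card {ℓ // ℓ ∈ L} = Fintype.card {x // x ∈ D} := by
    rw [Fintype.card_coe, Fintype.card_coe, ← hcard, hn]
  set e : {ℓ // ℓ ∈ L} ≃ {x // x ∈ D} := Fintype.equivOfCardEq ecard with he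
  have h1 : U.submatrix id ⇑e * V.submatrix (⇑e) id = 1 := by
    rw [Matrix.submatrix_mul_equiv, hUV, Matrix.submatrix_id_id]
  have h2 : V.submatrix (⇑e) id * U.submatrix id ⇑e = 1 := mul_eq_one_comm.mp h1
  have hVU0 : (V * U) ⟨d, hd⟩ ⟨d', hd'⟩ = 0 := by
    have h3 := congrFun (congrFun h2 (e.symm ⟨d, hd⟩)) (e.symm ⟨d', hd'⟩)
    have h4 : (V.submatrix (⇑e) id * U.submatrix id ⇑e) (e.symm ⟨d, hd⟩) (e.symm ⟨d', hd'⟩)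
        = (V * U) ⟨d, hd⟩ ⟨d', hd'⟩ := by
      rw [Matrix.mul_apply, Matrix.mul_apply]
      simp [Matrix.submatrix_apply]
    rw [h4] at h3
    rw [h3]
    apply Matrix.one_apply_ne
    intro hcontra
    exact hne (by simpa using congrArg (fun z => (e z).1) hcontra)
  have hentry : (V * U) ⟨d, hd⟩ ⟨d', hd'⟩ = 1 := by
    rw [Matrix.mul_apply]
    have hterm : ∀ ℓ : {ℓ // ℓ ∈ L},
        V ⟨d, hd⟩ ℓ * U ℓ ⟨d', hd'⟩ = (n:ℂ)⁻¹ := by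
      intro ℓ
      rw [hU, hV]
      simp only [Matrix.of_apply]
      rw [mul_assoc, ← Complex.exp_add]
      have harg : 2 * (Real.pi:ℂ) * Complex.I * ((-(ℓ.1 * d) : ℤ):ℂ) / (p:ℂ)
          + 2 * (Real.pi:ℂ) * Complex.I * ((ℓ.1 * d' : ℤ):ℂ) / (p:ℂ)
          = 2 * (Real.pi:ℂ) * Complex.I * ((ℓ.1 * (d' - d) : ℤ):ℂ) / (p:ℂ) := by
        push_cast; ring
      rw [harg, exp_one_of_dvd' hp (Dvd.dvd.mul_left (dvd_sub_comm.mp hdvd) ℓ.1), mul_one]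
    rw [Finset.sum_congr rfl (fun ℓ _ => hterm ℓ)]
    rw [Finset.sum_const, Finset.card_univ, Fintype.card_coe, ← hcard]
    simp [hn0]
  rw [hVU0] at hentry
  exact one_ne_zero hentry.symm

private lemma sum_dHat_eq {p : ℕ} {D L : Finset ℤ} (hHad : IsHadamardTriple p D L)
    (hD0 : (0:ℤ) ∈ D) (ξ : ℝ) :
    ∑ ℓ ∈ Finset.range p, dHat D ((ξ + ℓ) / p) = (D.card : ℂ)⁻¹ * p := by
  classical
  have hp : 0 < p := by have := hHad.1; omega
  have hp' : (p:ℂ) ≠ 0 := Nat.cast_ne_zero.mpr hp.ne'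
  have hnd : ∀ d ∈ D, d ≠ 0 → ¬ (p:ℤ) ∣ d := by
    intro d hd h0 hdvd
    exact h0 (sep_of_hadamard' hHad hd hD0 (by simpa using hdvd))
  simp only [dHat]
  rw [← Finset.mul_sum]
  congr 1
  rw [Finset.sum_comm]
  have hd : ∀ d ∈ D,
      (∑ ℓ ∈ Finset.range p,
        Complex.exp (2 * Real.pi * Complex.I * (d : ℝ) * (((ξ + ℓ) / p : ℝ):ℂ)))
      = if d = 0 then (p:ℂ) else 0 := by
    intro d hdD
    by_cases h0 : d = 0
    · subst h0
      simp
    · rw [if_neg h0]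
      have hsplit : ∀ ℓ : ℕ,
          Complex.exp (2 * Real.pi * Complex.I * (d : ℝ) * (((ξ + ℓ) / p : ℝ):ℂ))
          = Complex.exp (2 * Real.pi * Complex.I * (d:ℂ) * (ξ:ℂ) / (p:ℂ))
            * Complex.exp (2 * Real.pi * Complex.I * (d:ℂ) * (ℓ:ℂ) / (p:ℂ)) := by
        intro ℓ
        rw [← Complex.exp_add]
        congr 1
        push_cast
        field_simp
      rw [Finset.sum_congr rfl (fun ℓ _ => hsplit ℓ), ← Finset.mul_sum,
        sum_exp_geom' hp (hnd d hdD h0), mul_zero]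
  rw [Finset.sum_congr rfl hd, Finset.sum_ite_eq' D (0:ℤ) (fun _ => (p:ℂ))]
  simp [hD0]

end Statement3Aux

/-- Lemma 3.2.  For a Hadamard triple `(p, D, L)` on `ℝ` with `0 ∈ D ⊂ ℕ`
and `0 ∈ L ⊆ {0,1,…,p−1}`, the pair `(p, D)` satisfies the Double Points Condition
(`T_{p,D} = [0,1)`) iff `p > #D`. -/
theorem statement3
    (p : ℕ) (D L : Finset ℤ)
    (hHad : IsHadamardTriple p D L)
    (hD0 : (0 : ℤ) ∈ D) (hDpos : ∀ d ∈ D, 0 ≤ d)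
    (hL0 : (0 : ℤ) ∈ L) (hL : ∀ ℓ ∈ L, 0 ≤ ℓ ∧ ℓ < (p : ℤ)) :
    DPCS p D = Set.Ico (0 : ℝ) 1 ↔ D.card < p := by
  classical
  have hp1 := hHad.1
  have hcard := hHad.2.1
  have hp : 0 < p := by omega
  have hDne : D.Nonempty := ⟨0, hD0⟩
  have hNpos : 0 < D.card := Finset.card_pos.mpr hDne
  have hN0 : (D.card : ℂ) ≠ 0 := by simp [Finset.card_ne_zero.mpr hDne]
  constructor
  · -- DPCS = Ico → D.card < p
    intro hEq
    by_contra hnp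
    -- then D.card = p
    have hle : D.card ≤ p := by
      have hsub : L ⊆ Finset.Ico (0:ℤ) (p:ℤ) := by
        intro ℓ hℓ
        exact Finset.mem_Ico.mpr ⟨(hL ℓ hℓ).1, (hL ℓ hℓ).2⟩
      have := Finset.card_le_card hsub
      rw [Int.card_Ico] at this
      simp only [sub_zero, Int.toNat_natCast] at this
      omega
    have hNp : D.card = p := by omega
    -- 0 ∈ DPCS
    have h0mem : (0:ℝ) ∈ DPCS p D := by
      rw [hEq]
      exact ⟨le_refl _, zero_lt_one⟩
    obtain ⟨-, ℓ₁, ℓ₂, hℓ₁, hℓ₂, hne, hd1, hd2⟩ := h0mem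
    -- dHat vanishes at (0+ℓ)/p for 0 < ℓ < p
    have hz : ∀ ℓ : ℕ, ℓ ≠ 0 → ℓ < p → dHat D (((0:ℝ) + ℓ) / p) = 0 := by
      intro ℓ hℓ0 hℓp
      rw [dHat]
      apply mul_eq_zero_of_right
      set g : ℤ → ℕ := fun d => (d % (p:ℤ)).toNat with hg
      set F : ℕ → ℂ := fun k => Complex.exp (2 * Real.pi * Complex.I * ((ℓ:ℤ):ℂ) * (k:ℂ) / (p:ℂ))
        with hF
      have hpne : (p:ℤ) ≠ 0 := by exact_mod_cast hp.ne'
      have hmod : ∀ d : ℤ, ((g d : ℤ)) = d % (p:ℤ) :=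
        fun d => Int.toNat_of_nonneg (Int.emod_nonneg d hpne)
      have hterm : ∀ d ∈ D,
          Complex.exp (2 * Real.pi * Complex.I * (d : ℝ) * ((((0:ℝ) + ℓ) / p : ℝ):ℂ)) = F (g d) := by
        intro d _
        rw [hF, Complex.exp_eq_exp_iff_exp_sub_eq_one]
        have hdvd : (p:ℤ) ∣ (ℓ:ℤ) * (d - (g d : ℤ)) := by
          apply Dvd.dvd.mul_left
          rw [hmod d]
          exact ⟨d / p, by have := Int.mul_ediv_add_emod d (p:ℤ); omega⟩
        have harg : 2 * (Real.pi:ℂ) * Complex.I * ((d:ℝ):ℂ) * ((((0:ℝ) + ℓ) / p : ℝ):ℂ)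
            - 2 * Real.pi * Complex.I * ((ℓ:ℤ):ℂ) * ((g d : ℕ):ℂ) / (p:ℂ)
            = 2 * Real.pi * Complex.I * (((ℓ:ℤ) * (d - (g d : ℤ)) : ℤ):ℂ) / (p:ℂ) := by
          push_cast
          field_simp
          ring
        rw [harg]
        exact exp_one_of_dvd' hp hdvd
      rw [Finset.sum_congr rfl hterm]
      have hinj : ∀ x ∈ D, ∀ y ∈ D, g x = g y → x = y := by
        intro x hx y hy hxy
        apply sep_of_hadamard' hHad hx hy
        have hxy' : x % (p:ℤ) = y % (p:ℤ) := by
          rw [← hmod x, ← hmod y, hxy]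
        exact Int.ModEq.dvd (hxy'.symm : Int.ModEq (p:ℤ) y x)
      rw [← Finset.sum_image hinj]
      have himg : Finset.image g D = Finset.range p := by
        apply Finset.eq_of_subset_of_card_le
        · intro k hk
          obtain ⟨d, -, rfl⟩ := Finset.mem_image.mp hk
          rw [Finset.mem_range]
          have h1 : d % (p:ℤ) < (p:ℤ) := Int.emod_lt_of_pos d (by exact_mod_cast hp)
          have h2 := hmod d
          omega
        · rw [Finset.card_range, Finset.card_image_of_injOn hinj, hNp]
      rw [himg, hF]
      apply sum_exp_geom' hp
      intro hdvd
      have h1 : (0:ℤ) < (ℓ:ℤ) := by positivity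
      have h2 := Int.le_of_dvd h1 hdvd
      omega
    -- contradiction: one of ℓ₁ ℓ₂ is nonzero
    rcases Nat.eq_zero_or_pos ℓ₁ with h10 | h1p
    · exact hd2 (hz ℓ₂ (by omega) hℓ₂)
    · exact hd1 (hz ℓ₁ (by omega) hℓ₁)
  · -- D.card < p → DPCS = Ico
    intro hNp
    ext ξ
    constructor
    · exact fun h => h.1
    · intro hξ
      refine ⟨hξ, ?_⟩
      by_contra hno
      have hsum := sum_dHat_eq hHad hD0 ξ
      by_cases hex : ∃ ℓ₀ ∈ Finset.range p, dHat D ((ξ + ℓ₀) / p) ≠ 0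
      · obtain ⟨ℓ₀, hmem, hne0⟩ := hex
        have hzero : ∀ ℓ ∈ Finset.range p, ℓ ≠ ℓ₀ → dHat D ((ξ + ℓ) / p) = 0 := by
          intro ℓ hm hne
          by_contra hnz
          exact hno ⟨ℓ, ℓ₀, Finset.mem_range.mp hm, Finset.mem_range.mp hmem, hne, hnz, hne0⟩
        rw [Finset.sum_eq_single_of_mem ℓ₀ hmem hzero] at hsum
        have h1 : ‖dHat D ((ξ + ℓ₀) / p)‖ ≤ 1 := abs_dHat_le_one' D _
        rw [hsum] at h1
        rw [norm_mul, norm_inv, Complex.norm_natCast, Complex.norm_natCast] at h1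
        have hNr : (0:ℝ) < D.card := by exact_mod_cast hNpos
        have h2 : (p:ℝ) ≤ D.card := by
          have h3 := mul_le_mul_of_nonneg_left h1 hNr.le
          rw [← mul_assoc, mul_inv_cancel₀ hNr.ne', one_mul, mul_one] at h3
          exact h3
        have : (p:ℝ) > D.card := by exact_mod_cast hNp
        linarith
      · push_neg at hex
        rw [Finset.sum_congr rfl hex] at hsum
        simp only [Finset.sum_const, smul_zero] at hsum
        have h0 : ((D.card:ℂ))⁻¹ * (p:ℂ) ≠ 0 :=
          mul_ne_zero (inv_ne_zero hN0) (Nat.cast_ne_zero.mpr hp.ne')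
        exact h0 hsum.symm
end

section
/- Let (p, D, L) be a Hadamard triple on ℝ with p > 1, 0 ∈ D ⊂ ℕ, and p = #D. Then the Double Points Condition Set of (p, D) equals T_{p,D} = [0,1) \ (1/gcd D)ℤ, where gcd D is the greatest common divisor of the nonzero elements of D. (In particular, gcd(gcd D, p) = 1.) -/
open MeasureTheory Filter Topology Set

namespace St4aux

noncomputable def E (x : ℝ) : ℂ := Complex.exp (2 * Real.pi * Complex.I * x)

lemma E_add (x y : ℝ) : E (x + y) = E x * E y := by
  rw [E, E, E, ← Complex.exp_add]; push_cast; ring_nf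

lemma E_int (k : ℤ) : E k = 1 := by
  rw [E, ← Complex.exp_int_mul_two_pi_mul_I k]; congr 1; push_cast; ring

lemma E_zero : E 0 = 1 := by simpa using E_int 0

lemma conj_E (x : ℝ) : (starRingEnd ℂ) (E x) = E (-x) := by
  rw [E, E, ← Complex.exp_conj]
  congr 1
  simp [Complex.ext_iff]

lemma star_E (x : ℝ) : star (E x) = E (-x) := conj_E x

lemma E_pow (x : ℝ) (n : ℕ) : E x ^ n = E (n * x) := by
  rw [E, E, ← Complex.exp_nat_mul]; congr 1; push_cast; ring

lemma E_eq_one_iff (x : ℝ) : E x = 1 ↔ ∃ k : ℤ, x = k := by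
  constructor
  · intro hz
    rw [E, Complex.exp_eq_one_iff] at hz
    obtain ⟨n, hn⟩ := hz
    have hπ : (2 * (Real.pi:ℂ) * Complex.I) ≠ 0 := by
      simp [Real.pi_ne_zero, Complex.I_ne_zero]
    have h2 : (2 * (Real.pi:ℂ) * Complex.I) * (x:ℂ) =
        (2 * (Real.pi:ℂ) * Complex.I) * (n:ℂ) := by rw [hn]; ring
    have h3 : (x:ℂ) = ((n:ℝ):ℂ) := by push_cast; exact mul_left_cancel₀ hπ h2
    exact ⟨n, Complex.ofReal_injective h3⟩
  · rintro ⟨k, rfl⟩; exact E_int k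

lemma abs_E (x : ℝ) : ‖E x‖ = 1 := by
  rw [E, Complex.norm_exp]
  norm_num [Complex.mul_re, Complex.mul_im]

lemma sum_E_range (p : ℕ) (hp : 0 < p) (m : ℤ) :
    ∑ ℓ ∈ Finset.range p, E (m * ℓ / p) = if (p:ℤ) ∣ m then (p:ℂ) else 0 := by
  by_cases h : (p:ℤ) ∣ m
  · obtain ⟨k, rfl⟩ := h
    rw [if_pos ⟨k, rfl⟩]
    have : ∀ ℓ ∈ Finset.range p, E ((p*k : ℤ) * ℓ / p) = 1 := by
      intro ℓ _
      have : ((p*k : ℤ) : ℝ) * ℓ / p = ((k * ℓ : ℤ) : ℝ) := by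
        push_cast; field_simp
      rw [this, E_int]
    rw [Finset.sum_congr rfl this]
    simp
  · rw [if_neg h]
    have hπ : (2 * (Real.pi:ℂ) * Complex.I) ≠ 0 := by
      simp [Real.pi_ne_zero, Complex.I_ne_zero]
    have hz1 : E ((m:ℝ) / p) ≠ 1 := by
      intro hz
      obtain ⟨n, hn⟩ := (E_eq_one_iff _).mp hz
      apply h
      have hp' : (p:ℝ) ≠ 0 := Nat.cast_ne_zero.mpr hp.ne'
      refine ⟨n, ?_⟩
      have h9 : (m:ℝ) = (n:ℝ) * p := (div_eq_iff hp').mp hn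
      exact_mod_cast (by linarith : (m:ℝ) = (p:ℝ) * n)
    have hterm : ∀ ℓ ∈ Finset.range p, E (m * ℓ / p) = E ((m:ℝ)/p) ^ ℓ := by
      intro ℓ _
      rw [E_pow]
      congr 1
      ring
    rw [Finset.sum_congr rfl hterm, geom_sum_eq hz1, E_pow]
    have : (p:ℝ) * ((m:ℝ)/p) = ((m:ℤ):ℝ) := by field_simp
    rw [this, E_int]
    simp

lemma dHat_eq (D : Finset ℤ) (ξ : ℝ) :
    dHat D ξ = (D.card : ℂ)⁻¹ * ∑ d ∈ D, E (d * ξ) := by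
  rw [dHat]
  congr 1
  refine Finset.sum_congr rfl fun d _ => ?_
  rw [E]; congr 1; push_cast; ring

lemma abs_dHat_le (D : Finset ℤ) (hD : D.Nonempty) (ξ : ℝ) :
    ‖dHat D ξ‖ ≤ 1 := by
  have hc : (0:ℝ) < D.card := by exact_mod_cast Finset.card_pos.mpr hD
  rw [dHat_eq, norm_mul]
  have h1 : ‖(D.card : ℂ)⁻¹‖ = (D.card : ℝ)⁻¹ := by simp
  rw [h1, inv_mul_le_iff₀ hc, mul_one]
  calc ‖∑ d ∈ D, E (d * ξ)‖ ≤ ∑ d ∈ D, ‖E (d * ξ)‖ := by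
        exact norm_sum_le D (fun d => E (d * ξ))
    _ = (D.card : ℝ) := by simp [abs_E]

lemma dHat_eq_one (D : Finset ℤ) (hD : D.Nonempty) (ξ : ℝ)
    (h : ∀ d ∈ D, ∃ k : ℤ, (d:ℝ) * ξ = k) : dHat D ξ = 1 := by
  have hc : (D.card : ℂ) ≠ 0 := by
    exact_mod_cast Nat.cast_ne_zero.mpr (Finset.card_pos.mpr hD).ne'
  rw [dHat_eq]
  have : ∀ d ∈ D, E (d * ξ) = 1 := fun d hd => (E_eq_one_iff _).mpr (h d hd)
  rw [Finset.sum_congr rfl this]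
  simp [inv_mul_cancel₀ hc]

lemma exists_int_of_abs_dHat_eq_one (D : Finset ℤ) (hD0 : (0:ℤ) ∈ D) (ξ : ℝ)
    (h : ‖dHat D ξ‖ = 1) : ∀ d ∈ D, ∃ k : ℤ, (d:ℝ) * ξ = k := by
  have hne : D.Nonempty := ⟨0, hD0⟩
  have hc : (0:ℝ) < D.card := by exact_mod_cast Finset.card_pos.mpr hne
  set s : ℂ := ∑ d ∈ D, E (d * ξ) with hs
  have habs : ‖s‖ = D.card := by
    rw [dHat_eq, norm_mul] at h
    have h1 : ‖(D.card : ℂ)⁻¹‖ = (D.card : ℝ)⁻¹ := by simp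
    rw [h1, inv_mul_eq_one₀ (by positivity)] at h
    exact h.symm
  have hsne : s ≠ 0 := by
    intro h0; rw [h0, norm_zero] at habs; exact hc.ne' habs.symm
  set u : ℂ := s / ((‖s‖ : ℝ) : ℂ) with hu
  have hau : ‖u‖ = 1 := by
    rw [hu, norm_div]
    rw [habs]
    simp only [Complex.norm_real, Real.norm_eq_abs]
    rw [abs_of_pos hc]
    exact div_self hc.ne'
  have hcC : ((D.card : ℝ) : ℂ) ≠ 0 := by exact_mod_cast hc.ne'
  have hcs : (starRingEnd ℂ) u * s = (D.card : ℝ) := by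
    have h1 : s * (starRingEnd ℂ) s = (((D.card : ℝ) ^ 2 : ℝ) : ℂ) := by
      rw [Complex.mul_conj, Complex.normSq_eq_norm_sq, habs]
    have h2 : (starRingEnd ℂ) u = (starRingEnd ℂ) s / ((D.card : ℝ) : ℂ) := by
      rw [hu, map_div₀, Complex.conj_ofReal, habs]
    rw [h2, div_mul_eq_mul_div, mul_comm, h1]
    push_cast
    have hn0 : ((D.card : ℕ) : ℂ) ≠ 0 := Nat.cast_ne_zero.mpr (Finset.card_pos.mpr hne).ne'
    rw [pow_two, mul_div_assoc, div_self hn0, mul_one]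
  have hterm_le : ∀ d ∈ D, ((starRingEnd ℂ) u * E (d * ξ)).re ≤ 1 := by
    intro d _
    calc ((starRingEnd ℂ) u * E (d * ξ)).re ≤ ‖(starRingEnd ℂ) u * E (d * ξ)‖ :=
          Complex.re_le_norm _
      _ = 1 := by rw [norm_mul, Complex.norm_conj, hau, abs_E, one_mul]
  have hsum_re : ∑ d ∈ D, ((starRingEnd ℂ) u * E (d * ξ)).re = (D.card : ℝ) := by
    have : ((starRingEnd ℂ) u * s).re = (D.card : ℝ) := by rw [hcs]; simp
    rw [← this, hs, Finset.mul_sum, Complex.re_sum]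
  have hterm_eq : ∀ d ∈ D, ((starRingEnd ℂ) u * E (d * ξ)).re = 1 := by
    by_contra hcon
    push_neg at hcon
    obtain ⟨d0, hd0, hne0⟩ := hcon
    have hlt : ∑ d ∈ D, ((starRingEnd ℂ) u * E (d * ξ)).re < ∑ d ∈ D, (1:ℝ) :=
      Finset.sum_lt_sum hterm_le ⟨d0, hd0, lt_of_le_of_ne (hterm_le d0 hd0) hne0⟩
    rw [hsum_re, Finset.sum_const, nsmul_eq_mul, mul_one] at hlt
    exact lt_irrefl _ hlt
  have hw : ∀ d ∈ D, (starRingEnd ℂ) u * E (d * ξ) = 1 := by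
    intro d hd
    set w := (starRingEnd ℂ) u * E (d * ξ) with hwdef
    have h1 : ‖w‖ = 1 := by
      rw [hwdef, norm_mul, Complex.norm_conj, hau, abs_E, one_mul]
    have h2 : w.re = 1 := hterm_eq d hd
    have h3 : Complex.normSq w = 1 := by rw [← Complex.sq_norm, h1]; norm_num
    have h3' := Complex.normSq_apply w
    have h4 : w.im = 0 := by nlinarith [sq_nonneg w.im]
    exact Complex.ext (by simp [h2]) (by simp [h4])
  have hu1 : (starRingEnd ℂ) u = 1 := by
    have h0 := hw 0 hD0
    have hE0 : E (((0:ℤ):ℝ) * ξ) = 1 := (E_eq_one_iff _).mpr ⟨0, by push_cast; ring⟩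
    rwa [hE0, mul_one] at h0
  intro d hd
  have : E ((d:ℝ) * ξ) = 1 := by
    have := hw d hd
    rwa [hu1, one_mul] at this
  exact (E_eq_one_iff _).mp this

lemma D_distinct_mod (p : ℕ) (D L : Finset ℤ)
    (hHad : IsHadamardTriple p D L) (hpD : p = D.card) :
    ∀ d ∈ D, ∀ d' ∈ D, d ≠ d' → ¬ ((p:ℤ) ∣ (d - d')) := by
  obtain ⟨hp1, hcard, horth⟩ := hHad
  have hp0 : 0 < p := by omega
  have hpC : ((p:ℂ)) ≠ 0 := Nat.cast_ne_zero.mpr hp0.ne'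
  have hLp : L.card = p := by omega
  let eD : Fin p ≃ ↥D := ((D.equivFin).trans (finCongr hpD.symm)).symm
  let eL : Fin p ≃ ↥L := ((L.equivFin).trans (finCongr hLp)).symm
  set M : Matrix (Fin p) (Fin p) ℂ :=
    Matrix.of (fun i j => E (((eL i : ℤ) : ℝ) * ((eD j : ℤ) : ℝ) / p)) with hM
  have hrow : M * M.conjTranspose = (p:ℂ) • 1 := by
    ext i i'
    rw [Matrix.mul_apply]
    by_cases hii : i = i'
    · subst hii
      have : ∀ j, M i j * (M.conjTranspose) j i = 1 := by
        intro j
        rw [Matrix.conjTranspose_apply, hM]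
        simp only [Matrix.of_apply]
        rw [star_E, ← E_add]
        have : ((eL i : ℤ) : ℝ) * ((eD j : ℤ) : ℝ) / p +
            -(((eL i : ℤ) : ℝ) * ((eD j : ℤ) : ℝ) / p) = ((0:ℤ):ℝ) := by push_cast; ring
        rw [this, E_int]
      rw [Finset.sum_congr rfl (fun j _ => this j)]
      simp [Matrix.smul_apply]
    · have hll : (eL i : ℤ) ≠ (eL i' : ℤ) := by
        intro hcon
        apply hii
        apply eL.injective
        exact Subtype.coe_injective hcon
      have hsum : ∀ j, M i j * (M.conjTranspose) j i' =
          E ((((eL i : ℤ) - (eL i' : ℤ)) * (eD j : ℤ) : ℤ) / (p:ℝ)) := by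
        intro j
        rw [Matrix.conjTranspose_apply, hM]
        simp only [Matrix.of_apply]
        rw [star_E, ← E_add]
        congr 1
        push_cast
        ring
      rw [Finset.sum_congr rfl (fun j _ => hsum j)]
      have hconv : ∑ j : Fin p, E ((((eL i : ℤ) - (eL i' : ℤ)) * (eD j : ℤ) : ℤ) / (p:ℝ))
          = ∑ d ∈ D, E (((((eL i : ℤ) - (eL i' : ℤ)) * d : ℤ) : ℝ) / (p:ℝ)) := by
        rw [← Finset.sum_coe_sort D (fun d => E (((((eL i : ℤ) - (eL i' : ℤ)) * d : ℤ) : ℝ) / (p:ℝ)))]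
        exact Equiv.sum_comp eD (fun x : ↥D => E (((((eL i : ℤ) - (eL i' : ℤ)) * (x:ℤ) : ℤ) : ℝ) / (p:ℝ)))
      rw [hconv]
      have h0 := horth _ (eL i).2 _ (eL i').2 hll
      have : ∀ d ∈ D, E (((((eL i : ℤ) - (eL i' : ℤ)) * d : ℤ) : ℝ) / (p:ℝ)) =
          Complex.exp (2 * Real.pi * Complex.I * ((((eL i : ℤ) - (eL i' : ℤ)) * d : ℤ) : ℝ) / (p : ℝ)) := by
        intro d _
        rw [E]
        rw [mul_div_assoc]
        congr 1
        push_cast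
        ring
      rw [Finset.sum_congr rfl this, h0]
      simp [Matrix.smul_apply, Matrix.one_apply_ne hii]
  have hcol : ((p:ℂ)⁻¹ • M.conjTranspose) * M = 1 := by
    rw [← mul_eq_one_comm]
    rw [Matrix.mul_smul, hrow, smul_smul, inv_mul_cancel₀ hpC, one_smul]
  intro d hd d' hd' hne hdvd
  have hjj : eD.symm ⟨d, hd⟩ ≠ eD.symm ⟨d', hd'⟩ := by
    intro hcon
    exact hne (by simpa using congrArg (fun x => ((eD.symm.symm x : ↥D) : ℤ)) hcon)
  have hentry := congrFun (congrFun hcol (eD.symm ⟨d, hd⟩)) (eD.symm ⟨d', hd'⟩)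
  rw [Matrix.mul_apply, Matrix.one_apply_ne hjj] at hentry
  obtain ⟨k, hk⟩ := hdvd
  have hterm : ∀ i : Fin p, ((p:ℂ)⁻¹ • M.conjTranspose) (eD.symm ⟨d, hd⟩) i * M i (eD.symm ⟨d', hd'⟩)
      = (p:ℂ)⁻¹ := by
    intro i
    rw [Matrix.smul_apply, Matrix.conjTranspose_apply, hM]
    simp only [Matrix.of_apply, Equiv.apply_symm_apply]
    rw [star_E, smul_eq_mul, mul_assoc, ← E_add]
    have harg : -(((eL i : ℤ) : ℝ) * ((d : ℤ) : ℝ) / p) + ((eL i : ℤ) : ℝ) * ((d' : ℤ) : ℝ) / p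
        = (((eL i : ℤ) * (-k) : ℤ) : ℝ) := by
      have hp' : (p:ℝ) ≠ 0 := Nat.cast_ne_zero.mpr hp0.ne'
      have : ((d' : ℝ) - (d:ℝ)) = -((p:ℝ) * k) := by
        have := congrArg (fun z : ℤ => (z:ℝ)) hk
        push_cast at this ⊢
        linarith
      have h5 : (((d':ℤ):ℝ) - ((d:ℤ):ℝ)) / p = -(k:ℝ) := by
        rw [this]; field_simp
      rw [show (((eL i : ℤ) * -k : ℤ):ℝ) = ((eL i : ℤ):ℝ) * -(k:ℝ) by push_cast; ring]
      rw [show -(((eL i : ℤ):ℝ) * ((d:ℤ):ℝ) / p) + ((eL i : ℤ):ℝ) * ((d':ℤ):ℝ) / p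
          = ((eL i : ℤ):ℝ) * ((((d':ℤ):ℝ) - ((d:ℤ):ℝ)) / p) from by ring]
      rw [h5]
    rw [harg, E_int, mul_one]
  rw [Finset.sum_congr rfl (fun i _ => hterm i)] at hentry
  rw [Finset.sum_const, Finset.card_univ, Fintype.card_fin, nsmul_eq_mul] at hentry
  rw [mul_inv_cancel₀ hpC] at hentry
  exact one_ne_zero hentry

lemma sum_abs_sq (p : ℕ) (hp : 0 < p) (D : Finset ℤ) (hDcard : D.card = p)
    (hdis : ∀ d ∈ D, ∀ d' ∈ D, d ≠ d' → ¬((p:ℤ) ∣ (d - d'))) (ξ : ℝ) :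
    ∑ ℓ ∈ Finset.range p, (‖dHat D ((ξ + ℓ) / p)‖)^2 = 1 := by
  have hpR : (0:ℝ) < p := by exact_mod_cast hp
  have hpC : ((p:ℂ)) ≠ 0 := Nat.cast_ne_zero.mpr hp.ne'
  have key : ∀ d ∈ D, ∀ d' ∈ D,
      ∑ ℓ ∈ Finset.range p, E (((d - d' : ℤ) : ℝ) * (ξ + ℓ) / p) =
        if d = d' then (p:ℂ) else 0 := by
    intro d hd d' hd'
    by_cases hdd : d = d'
    · subst hdd
      rw [if_pos rfl]
      have : ∀ ℓ ∈ Finset.range p, E (((d - d : ℤ) : ℝ) * (ξ + ℓ) / p) = 1 := by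
        intro ℓ _
        rw [show ((d - d : ℤ) : ℝ) * (ξ + ℓ) / p = 0 by push_cast; ring, E_zero]
      rw [Finset.sum_congr rfl this]
      simp
    · rw [if_neg hdd]
      have hsplit : ∀ ℓ ∈ Finset.range p, E (((d - d' : ℤ) : ℝ) * (ξ + ℓ) / p) =
          E (((d - d' : ℤ) : ℝ) * ξ / p) * E (((d - d' : ℤ) : ℝ) * ℓ / p) := by
        intro ℓ _
        rw [← E_add]
        congr 1
        ring
      rw [Finset.sum_congr rfl hsplit, ← Finset.mul_sum,
        sum_E_range p hp (d - d'), if_neg (hdis d hd d' hd' hdd), mul_zero]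
  have main : ∑ ℓ ∈ Finset.range p,
      (dHat D ((ξ + ℓ) / p) * (starRingEnd ℂ) (dHat D ((ξ + ℓ) / p))) = 1 := by
    have hterm : ∀ ℓ : ℕ, dHat D ((ξ + ℓ) / p) * (starRingEnd ℂ) (dHat D ((ξ + ℓ) / p)) =
        (p:ℂ)⁻¹ * (p:ℂ)⁻¹ *
          ∑ d ∈ D, ∑ d' ∈ D, E (((d - d' : ℤ) : ℝ) * (ξ + ℓ) / p) := by
      intro ℓ
      rw [dHat_eq, hDcard]
      rw [map_mul, map_sum]
      have hconjinv : (starRingEnd ℂ) ((p:ℕ) : ℂ)⁻¹ = ((p:ℕ) : ℂ)⁻¹ := by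
        rw [map_inv₀, Complex.conj_natCast]
      rw [hconjinv]
      have hconjE : ∀ d' ∈ D, (starRingEnd ℂ) (E (d' * ((ξ + ℓ) / p))) =
          E (-(d' * ((ξ + ℓ) / p))) := fun d' _ => conj_E _
      rw [Finset.sum_congr rfl hconjE]
      rw [show ((p:ℂ)⁻¹ * ∑ d ∈ D, E (↑d * ((ξ + ↑ℓ) / ↑p))) *
          ((p:ℂ)⁻¹ * ∑ d' ∈ D, E (-(↑d' * ((ξ + ↑ℓ) / ↑p)))) =
          (p:ℂ)⁻¹ * (p:ℂ)⁻¹ * ((∑ d ∈ D, E (↑d * ((ξ + ↑ℓ) / ↑p))) *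
            (∑ d' ∈ D, E (-(↑d' * ((ξ + ↑ℓ) / ↑p))))) from by ring]
      congr 1
      rw [Finset.sum_mul_sum]
      refine Finset.sum_congr rfl fun d _ => Finset.sum_congr rfl fun d' _ => ?_
      rw [← E_add]
      congr 1
      push_cast
      field_simp
      ring
    have h2 : ∑ ℓ ∈ Finset.range p, ∑ d ∈ D, ∑ d' ∈ D,
        E (((d - d' : ℤ) : ℝ) * (ξ + ℓ) / p) = (p:ℂ) * p := by
      rw [Finset.sum_comm]
      have hinner : ∀ d ∈ D, ∑ ℓ ∈ Finset.range p, ∑ d' ∈ D,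
          E (((d - d' : ℤ) : ℝ) * (ξ + ℓ) / p) = (p:ℂ) := by
        intro d hd
        rw [Finset.sum_comm]
        rw [Finset.sum_congr rfl (fun d' hd' => key d hd d' hd')]
        rw [Finset.sum_ite_eq D d (fun _ => (p:ℂ)), if_pos hd]
      rw [Finset.sum_congr rfl hinner, Finset.sum_const, hDcard, nsmul_eq_mul]
    rw [Finset.sum_congr rfl (fun ℓ _ => hterm ℓ), ← Finset.mul_sum, h2]
    field_simp
  have hcast : ((∑ ℓ ∈ Finset.range p, (‖dHat D ((ξ + ℓ) / p)‖)^2 : ℝ) : ℂ) = 1 := by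
    rw [Complex.ofReal_sum]
    calc ∑ ℓ ∈ Finset.range p, ((‖dHat D ((ξ + ℓ) / p)‖ ^ 2 : ℝ) : ℂ)
        = ∑ ℓ ∈ Finset.range p,
            (dHat D ((ξ + ℓ) / p) * (starRingEnd ℂ) (dHat D ((ξ + ℓ) / p))) := by
          refine Finset.sum_congr rfl fun ℓ _ => ?_
          rw [Complex.sq_norm]
          exact (Complex.mul_conj _).symm
      _ = 1 := main
  exact_mod_cast hcast

lemma others_zero (p : ℕ) (hp : 0 < p) (D : Finset ℤ) (hDcard : D.card = p)
    (hdis : ∀ d ∈ D, ∀ d' ∈ D, d ≠ d' → ¬((p:ℤ) ∣ (d - d'))) (ξ : ℝ)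
    (ℓ₀ : ℕ) (hℓ₀ : ℓ₀ ∈ Finset.range p)
    (h1 : ‖dHat D ((ξ + ℓ₀) / p)‖ = 1) :
    ∀ ℓ ∈ Finset.range p, ℓ ≠ ℓ₀ → dHat D ((ξ + ℓ) / p) = 0 := by
  have hsum := sum_abs_sq p hp D hDcard hdis ξ
  have hsplit := Finset.add_sum_erase (Finset.range p)
    (fun ℓ => (‖dHat D ((ξ + ℓ) / p)‖)^2) hℓ₀
  rw [hsum] at hsplit
  simp only [h1, one_pow] at hsplit
  have herase : ∑ ℓ ∈ (Finset.range p).erase ℓ₀,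
      (‖dHat D ((ξ + ℓ) / p)‖)^2 = 0 := by linarith
  intro ℓ hℓ hne
  have hmem : ℓ ∈ (Finset.range p).erase ℓ₀ := Finset.mem_erase.mpr ⟨hne, hℓ⟩
  have hzero := (Finset.sum_eq_zero_iff_of_nonneg
    (s := (Finset.range p).erase ℓ₀)
    (f := fun i : ℕ => (‖dHat D ((ξ + (i:ℝ)) / p)‖)^2)
    (fun i _ => sq_nonneg _)).mp herase ℓ hmem
  have habs0 : ‖dHat D ((ξ + ℓ) / p)‖ = 0 := by
    nlinarith [norm_nonneg (dHat D ((ξ + ℓ) / p))]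
  exact norm_eq_zero.mp habs0

lemma gcd_mul_int (s : Finset ℤ) (t : ℝ) (h : ∀ d ∈ s, ∃ k : ℤ, (d:ℝ) * t = k) :
    ∃ k : ℤ, ((s.gcd id : ℤ) : ℝ) * t = k := by
  classical
  induction s using Finset.induction_on with
  | empty => exact ⟨0, by simp⟩
  | @insert a s ha ih =>
    obtain ⟨k1, hk1⟩ := h a (Finset.mem_insert_self a s)
    obtain ⟨k2, hk2⟩ := ih (fun d hd => h d (Finset.mem_insert_of_mem hd))
    rw [Finset.gcd_insert]
    set G := s.gcd id with hG
    refine ⟨Int.gcdA a G * k1 + Int.gcdB a G * k2, ?_⟩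
    have hg : (GCDMonoid.gcd (id a) G : ℤ) = a * Int.gcdA a G + G * Int.gcdB a G := by
      rw [id_eq, ← Int.coe_gcd]; exact Int.gcd_eq_gcd_ab a G
    rw [hg]
    push_cast
    linear_combination (Int.gcdA a G : ℝ) * hk1 + (Int.gcdB a G : ℝ) * hk2

end St4aux

/-- Lemma 3.3.  For a Hadamard triple `(p, D, L)` on `ℝ` with `0 ∈ D ⊂ ℕ`
and `p = #D`, the Double Points Condition Set is
`T_{p,D} = [0,1) \ (1/gcd D)ℤ`; in particular `gcd(gcd D, p) = 1`. -/



theorem statement4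
    (p : ℕ) (D L : Finset ℤ)
    (hHad : IsHadamardTriple p D L)
    (hD0 : (0 : ℤ) ∈ D) (hDpos : ∀ d ∈ D, 0 ≤ d)
    (hpD : p = D.card) :
    DPCS p D =
        Set.Ico (0 : ℝ) 1 \ {x : ℝ | ∃ k : ℤ, x = (k : ℝ) / ((D.gcd id : ℤ) : ℝ)} ∧
      Int.gcd (D.gcd id) (p : ℤ) = 1 := by
  classical
  obtain ⟨hp1, hcard, horth⟩ := hHad
  have hp0 : 0 < p := by omega
  have hDcard : D.card = p := hpD.symm
  have hdis := St4aux.D_distinct_mod p D L ⟨hp1, hcard, horth⟩ hpD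
  have hDne : D.Nonempty := ⟨0, hD0⟩
  set g : ℤ := D.gcd id with hgdef
  have hone : 1 < D.card := by omega
  have hgne : g ≠ 0 := by
    intro h0
    obtain ⟨d, hd, hdne⟩ := Finset.exists_mem_ne hone 0
    exact hdne (Finset.gcd_eq_zero_iff.mp h0 d hd)
  have hgR : ((g:ℤ):ℝ) ≠ 0 := Int.cast_ne_zero.mpr hgne
  have hpR : (p:ℝ) ≠ 0 := Nat.cast_ne_zero.mpr hp0.ne'
  -- coprimality
  have hcop : Int.gcd g (p:ℤ) = 1 := by
    by_contra hc1
    set c : ℕ := Int.gcd g (p:ℤ) with hc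
    have hcp : (c:ℤ) ∣ (p:ℤ) := Int.gcd_dvd_right _ _
    have hcg : (c:ℤ) ∣ g := Int.gcd_dvd_left _ _
    have hcpn : c ∣ p := by exact_mod_cast hcp
    have hc0 : c ≠ 0 := by
      intro h0
      rw [h0] at hcpn
      have := Nat.eq_zero_of_zero_dvd hcpn
      omega
    have hc2 : 2 ≤ c := by omega
    obtain ⟨ℓ, hℓ⟩ := hcpn
    have hℓpos : 0 < ℓ := by
      rcases Nat.eq_zero_or_pos ℓ with h | h
      · subst h
        rw [Nat.mul_zero] at hℓ
        omega
      · exact h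
    have hℓltp : ℓ < p := by
      have h2l : 2 * ℓ ≤ c * ℓ := Nat.mul_le_mul_right _ hc2
      have hpe : p = c * ℓ := hℓ
      linarith
    have hℓne0 : ℓ ≠ 0 := hℓpos.ne'
    -- dHat at (0 + 0)/p equals 1
    have h1 : dHat D ((0 + ((0:ℕ):ℝ)) / p) = 1 := by
      apply St4aux.dHat_eq_one D hDne
      intro d hd
      exact ⟨0, by push_cast; ring⟩
    have h1abs : ‖dHat D ((0 + ((0:ℕ):ℝ)) / p)‖ = 1 := by rw [h1]; simp
    have hz := St4aux.others_zero p hp0 D hDcard hdis 0 0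
      (Finset.mem_range.mpr hp0) h1abs ℓ (Finset.mem_range.mpr hℓltp) hℓne0
    -- but dHat at (0 + ℓ)/p equals 1 as well
    have h2 : dHat D ((0 + ((ℓ:ℕ):ℝ)) / p) = 1 := by
      apply St4aux.dHat_eq_one D hDne
      intro d hd
      obtain ⟨e₁, he₁⟩ := hcg
      obtain ⟨e₂, he₂⟩ := (Finset.gcd_dvd hd : D.gcd id ∣ id d)
      rw [id_eq] at he₂
      have hde : d = (c:ℤ) * (e₁ * e₂) := by
        rw [he₂, ← hgdef, he₁]
        ring
      refine ⟨e₁ * e₂, ?_⟩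
      have hdR : (d:ℝ) = (c:ℝ) * ((e₁ * e₂ : ℤ):ℝ) := by exact_mod_cast hde
      have hpR' : (p:ℝ) = (c:ℝ) * (ℓ:ℝ) := by exact_mod_cast hℓ
      rw [hdR, hpR']
      have hcR : (c:ℝ) ≠ 0 := Nat.cast_ne_zero.mpr hc0
      have hℓR : ((ℓ:ℕ):ℝ) ≠ 0 := Nat.cast_ne_zero.mpr hℓne0
      field_simp
      ring
    rw [hz] at h2
    exact zero_ne_one h2
  refine ⟨?_, hcop⟩
  ext ξ
  simp only [DPCS, Set.mem_setOf_eq, Set.mem_diff]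
  constructor
  · rintro ⟨hIco, ℓ₁, ℓ₂, h1p, h2p, h12, hz1, hz2⟩
    refine ⟨hIco, ?_⟩
    rintro ⟨m, hξ⟩
    -- find ℓ₀ with p ∣ m + g ℓ₀
    have hco : IsCoprime g ((p:ℕ):ℤ) := Int.isCoprime_iff_gcd_eq_one.mpr hcop
    obtain ⟨a, b, hab⟩ := hco
    set q : ℤ := ((-m) * a) % p with hq
    have hq0 : 0 ≤ q := Int.emod_nonneg _ (by exact_mod_cast hp0.ne')
    have hqp : q < p := Int.emod_lt_of_pos _ (by exact_mod_cast hp0)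
    have hqdef : q = (-m) * a - (p:ℤ) * (((-m) * a) / p) := by
      rw [hq]; exact Int.emod_def _ _
    set k' : ℤ := m * b - g * (((-m) * a) / p) with hk'
    have hdvd0 : m + g * q = (p:ℤ) * k' := by
      rw [hqdef, hk']
      linear_combination (-m) * hab
    set ℓ₀ : ℕ := q.toNat with hℓ₀
    have hℓ₀q : (ℓ₀ : ℤ) = q := Int.toNat_of_nonneg hq0
    have hℓ₀p : ℓ₀ < p := by omega
    have hℓ₀R : ((ℓ₀:ℕ):ℝ) = ((q:ℤ):ℝ) := by exact_mod_cast congrArg (fun z : ℤ => (z:ℝ)) hℓ₀q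
    have h8 : ξ + ((ℓ₀:ℕ):ℝ) = (p:ℝ) * k' / g := by
      rw [hξ, hℓ₀R]
      have hcast : (m:ℝ) + (g:ℝ) * (q:ℝ) = (p:ℝ) * (k':ℝ) := by exact_mod_cast hdvd0
      field_simp
      linear_combination hcast
    have h1 : dHat D ((ξ + ((ℓ₀:ℕ):ℝ)) / p) = 1 := by
      apply St4aux.dHat_eq_one D hDne
      intro d hd
      obtain ⟨e, hde⟩ := (Finset.gcd_dvd hd : D.gcd id ∣ id d)
      rw [id_eq] at hde
      refine ⟨e * k', ?_⟩
      have hdeR : (d:ℝ) = (g:ℝ) * (e:ℝ) := by rw [← hgdef] at hde; exact_mod_cast hde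
      rw [h8, hdeR]
      push_cast
      field_simp
    have h1abs : ‖dHat D ((ξ + ((ℓ₀:ℕ):ℝ)) / p)‖ = 1 := by rw [h1]; simp
    have hz := St4aux.others_zero p hp0 D hDcard hdis ξ ℓ₀
      (Finset.mem_range.mpr hℓ₀p) h1abs
    rcases ne_or_eq ℓ₁ ℓ₀ with hne1 | heq1
    · exact hz1 (hz ℓ₁ (Finset.mem_range.mpr h1p) hne1)
    · have hne2 : ℓ₂ ≠ ℓ₀ := by omega
      exact hz2 (hz ℓ₂ (Finset.mem_range.mpr h2p) hne2)
  · rintro ⟨hIco, hnk⟩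
    refine ⟨hIco, ?_⟩
    -- every ℓ gives |dHat| < 1
    have hlt : ∀ ℓ ∈ Finset.range p, ‖dHat D ((ξ + ℓ) / p)‖ < 1 := by
      intro ℓ _
      rcases lt_or_eq_of_le (St4aux.abs_dHat_le D hDne ((ξ + ℓ) / p)) with h | h
      · exact h
      · exfalso
        have hints := St4aux.exists_int_of_abs_dHat_eq_one D hD0 ((ξ + ℓ) / p) h
        obtain ⟨k, hk⟩ := St4aux.gcd_mul_int D ((ξ + ℓ) / p) hints
        apply hnk
        refine ⟨k * p - ℓ * g, ?_⟩
        rw [← hgdef] at hk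
        have hgp : (g:ℝ) * (ξ + ℓ) = k * p := by
          field_simp at hk
          linarith [hk]
        push_cast
        rw [eq_div_iff hgR]
        linarith [hgp]
    set S : Finset ℕ := (Finset.range p).filter (fun ℓ => dHat D ((ξ + ℓ) / p) ≠ 0) with hS
    have hsum := St4aux.sum_abs_sq p hp0 D hDcard hdis ξ
    have hsumS : ∑ ℓ ∈ S, (‖dHat D ((ξ + ℓ) / p)‖)^2 = 1 := by
      rw [hS, Finset.sum_filter_of_ne, hsum]
      intro x _ hx
      intro h0
      apply hx
      rw [h0]
      simp
    have hcard2 : 1 < S.card := by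
      by_contra hle
      push_neg at hle
      interval_cases h : S.card
      · rw [Finset.card_eq_zero.mp h, Finset.sum_empty] at hsumS
        exact zero_ne_one hsumS
      · obtain ⟨ℓ, hℓ⟩ := Finset.card_eq_one.mp h
        rw [hℓ, Finset.sum_singleton] at hsumS
        have hℓS : ℓ ∈ S := by rw [hℓ]; exact Finset.mem_singleton_self ℓ
        have hℓr : ℓ ∈ Finset.range p := Finset.mem_of_mem_filter ℓ hℓS
        have := hlt ℓ hℓr
        nlinarith [norm_nonneg (dHat D ((ξ + ℓ) / p))]
    obtain ⟨ℓ₁, hℓ₁, ℓ₂, hℓ₂, h12⟩ := Finset.one_lt_card.mp hcard2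
    have h1 := Finset.mem_filter.mp hℓ₁
    have h2 := Finset.mem_filter.mp hℓ₂
    exact ⟨ℓ₁, ℓ₂, Finset.mem_range.mp h1.1, Finset.mem_range.mp h2.1, h12, h1.2, h2.2⟩
end

section
/- Let {f_n} be a sequence of entire functions on ℂ converging to a function f uniformly on every compact subset of ℂ. For an entire function g, let z(g) denote the number of zeros of g (counted with multiplicity) in the closed unit disk {z ∈ ℂ : |z| ≤ 1} (with z(g) = ∞ if g ≡ 0). If z(f_n) → ∞ as n → ∞, then f ≡ 0. -/
open Filter Topology Metric
open scoped ENNReal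

/-- If `f = (· - z₀) * h` with `f, h` entire, then the vanishing order of `f` at any `z`
is that of `h` plus one if `z = z₀`. -/
lemma order_aux_stmt11 {f h : ℂ → ℂ} {z₀ : ℂ}
    (hfd : Differentiable ℂ f) (hhd : Differentiable ℂ h)
    (hfh : ∀ z, f z = (z - z₀) * h z) (z : ℂ) :
    analyticOrderAt f z
      = analyticOrderAt h z + (if z = z₀ then 1 else 0) := by
  by_cases ho : analyticOrderAt h z = ⊤
  · have hft : analyticOrderAt f z = ⊤ := by
      rw [analyticOrderAt_eq_top] at ho ⊢
      filter_upwards [ho] with u hu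
      rw [hfh u, hu, mul_zero]
    rw [hft, ho, top_add]
  · obtain ⟨m, hm⟩ := ENat.ne_top_iff_exists.mp ho
    obtain ⟨g, hg, hgz, hgev⟩ := (hhd.analyticAt z).analyticOrderAt_eq_natCast.mp hm.symm
    by_cases hz : z = z₀
    · subst hz
      have hford : analyticOrderAt f z = ((m + 1 : ℕ) : ℕ∞) := by
        rw [(hfd.analyticAt z).analyticOrderAt_eq_natCast]
        refine ⟨g, hg, hgz, ?_⟩
        filter_upwards [hgev] with u hu
        rw [hfh u, hu, smul_eq_mul, smul_eq_mul, pow_succ]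
        ring
      rw [hford, ← hm, if_pos rfl]
      norm_cast
    · have hford : analyticOrderAt f z = ((m : ℕ) : ℕ∞) := by
        rw [(hfd.analyticAt z).analyticOrderAt_eq_natCast]
        refine ⟨fun u => (u - z₀) * g u,
          ((analyticAt_id.sub analyticAt_const).mul hg),
          mul_ne_zero (sub_ne_zero.mpr hz) hgz, ?_⟩
        filter_upwards [hgev] with u hu
        rw [hfh u, hu, smul_eq_mul, smul_eq_mul]
        ring
      rw [hford, ← hm, if_neg hz, add_zero]

/-- Key quantitative bound: an entire function with at least `N` zeros (with multiplicity)
in the closed unit disk, bounded by `C` on the sphere of radius `‖w‖ + 3`, satisfies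
`‖f w‖ ≤ ((‖w‖+1)/(‖w‖+2))^N * C`. -/
lemma key_bound_stmt11 (w : ℂ) : ∀ N : ℕ, ∀ (f : ℂ → ℂ) (hf : Differentiable ℂ f) (C : ℝ),
    ((N : ℝ≥0∞) ≤ ∑' z : closedBall (0 : ℂ) 1, ((analyticOrderAt f z.1).toENNReal)) →
    (∀ x ∈ sphere (0 : ℂ) (‖w‖ + 3), ‖f x‖ ≤ C) →
    ‖f w‖ ≤ ((‖w‖ + 1) / (‖w‖ + 2)) ^ N * C := by
  have hR : (0 : ℝ) < ‖w‖ + 3 := by positivity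
  intro N
  induction N with
  | zero =>
    intro f hf C _ hC
    rw [pow_zero, one_mul]
    refine Complex.norm_le_of_forall_mem_frontier_norm_le (U := ball (0 : ℂ) (‖w‖ + 3))
      isBounded_ball hf.diffContOnCl (fun x hx => ?_) ?_
    · rw [frontier_ball _ (ne_of_gt hR)] at hx
      exact hC x hx
    · rw [closure_ball _ (ne_of_gt hR)]
      exact mem_closedBall_zero_iff.mpr (by linarith [norm_nonneg w])
  | succ N ih =>
    intro f hf C hsum hC
    obtain ⟨x₀, hx₀⟩ : (sphere (0 : ℂ) (‖w‖ + 3)).Nonempty :=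
      NormedSpace.sphere_nonempty.mpr hR.le
    have hC0 : 0 ≤ C := le_trans (norm_nonneg _) (hC x₀ hx₀)
    -- find a zero z₀ in the closed unit disk
    have hne : ∃ z : closedBall (0 : ℂ) 1, ((analyticOrderAt f z.1).toENNReal) ≠ 0 := by
      by_contra hcon
      push_neg at hcon
      have h0 : (∑' z : closedBall (0 : ℂ) 1, ((analyticOrderAt f z.1).toENNReal)) = 0 :=
        ENNReal.tsum_eq_zero.mpr hcon
      rw [h0, nonpos_iff_eq_zero] at hsum
      simp at hsum
    obtain ⟨z₀, hz₀⟩ := hne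
    have hordne : analyticOrderAt f z₀.1 ≠ 0 := by
      intro hord
      rw [hord] at hz₀
      simp at hz₀
    by_cases htop : analyticOrderAt f z₀.1 = ⊤
    · -- f is identically zero
      have hev : ∀ᶠ u in 𝓝 z₀.1, f u = 0 :=
        analyticOrderAt_eq_top.mp htop
      have hall :
          Set.EqOn f 0 Set.univ :=
        AnalyticOnNhd.eqOn_zero_of_preconnected_of_eventuallyEq_zero
          (fun u _ => hf.analyticAt u) isPreconnected_univ (Set.mem_univ z₀.1) hev
      have : f w = 0 := hall (Set.mem_univ w)
      rw [this, norm_zero]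
      positivity
    · -- f z₀ = 0; divide out by (z - z₀)
      have hfz₀ : f z₀.1 = 0 := by
        by_contra hne0
        apply hordne
        have : analyticOrderAt f z₀.1 = ((0 : ℕ) : ℕ∞) := by
          rw [(hf.analyticAt z₀.1).analyticOrderAt_eq_natCast]
          exact ⟨f, hf.analyticAt z₀.1, hne0, by simp⟩
        simpa using this
      have hhd : Differentiable ℂ (dslope f z₀.1) := by
        intro u
        rcases eq_or_ne u z₀.1 with rfl | hu
        · obtain ⟨p, hp⟩ := hf.analyticAt z₀.1
          exact hp.has_fpower_series_dslope_fslope.analyticAt.differentiableAt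
        · exact (differentiableAt_dslope_of_ne hu).mpr (hf u)
      have hfh : ∀ u, f u = (u - z₀.1) * dslope f z₀.1 u := by
        intro u
        have h1 := sub_smul_dslope f z₀.1 u
        rw [hfz₀, sub_zero] at h1
        rw [← h1, smul_eq_mul]
      have hordrel : ∀ z : closedBall (0 : ℂ) 1,
          ((analyticOrderAt f z.1).toENNReal)
            = ((analyticOrderAt (dslope f z₀.1) z.1).toENNReal)
              + (if z = z₀ then 1 else 0) := by
        intro z
        rw [order_aux_stmt11 hf hhd hfh z.1, ENat.toENNReal_add]
        congr 1
        by_cases hzz : z = z₀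
        · rw [if_pos (by rw [hzz]), if_pos hzz, ENat.toENNReal_one]
        · rw [if_neg (fun hc => hzz (Subtype.ext hc)), if_neg hzz, ENat.toENNReal_zero]
      have hsum' : ((N : ℕ) : ℝ≥0∞)
          ≤ ∑' z : closedBall (0 : ℂ) 1, ((analyticOrderAt (dslope f z₀.1) z.1).toENNReal) := by
        have e1 : (∑' z : closedBall (0 : ℂ) 1, ((analyticOrderAt f z.1).toENNReal))
            = (∑' z : closedBall (0 : ℂ) 1, ((analyticOrderAt (dslope f z₀.1) z.1).toENNReal)) + 1 := by
          rw [tsum_congr hordrel, ENNReal.tsum_add]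
          congr 1
          rw [tsum_eq_single z₀ (fun b hb => if_neg hb), if_pos rfl]
        rw [e1] at hsum
        push_cast at hsum
        exact (ENNReal.add_le_add_iff_right ENNReal.one_ne_top).mp hsum
      have hCh : ∀ x ∈ sphere (0 : ℂ) (‖w‖ + 3), ‖dslope f z₀.1 x‖ ≤ C / (‖w‖ + 2) := by
        intro x hx
        have hxn : ‖x‖ = ‖w‖ + 3 := mem_sphere_zero_iff_norm.mp hx
        have hz₀n : ‖z₀.1‖ ≤ 1 := mem_closedBall_zero_iff.mp z₀.2
        have hxz : x ≠ z₀.1 := by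
          intro hc
          rw [hc] at hxn
          have := norm_nonneg w
          linarith
        have hlow : ‖w‖ + 2 ≤ ‖x - z₀.1‖ := by
          have := norm_sub_norm_le x z₀.1
          linarith
        have hval : dslope f z₀.1 x = f x / (x - z₀.1) := by
          rw [dslope_of_ne f hxz, slope_def_field, hfz₀, sub_zero]
        rw [hval, norm_div]
        exact div_le_div₀ hC0 (hC x hx) (by positivity) hlow
      have hih := ih (dslope f z₀.1) hhd (C / (‖w‖ + 2)) hsum' hCh
      have hwz : ‖w - z₀.1‖ ≤ ‖w‖ + 1 := by
        have h1 := norm_sub_le w z₀.1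
        have hz₀n : ‖z₀.1‖ ≤ 1 := mem_closedBall_zero_iff.mp z₀.2
        linarith
      have hstep : ‖f w‖ ≤ (‖w‖ + 1) * (((‖w‖ + 1) / (‖w‖ + 2)) ^ N * (C / (‖w‖ + 2))) := by
        rw [hfh w, norm_mul]
        exact mul_le_mul hwz hih (norm_nonneg _) (by positivity)
      have h2 : (0 : ℝ) < ‖w‖ + 2 := by positivity
      calc ‖f w‖ ≤ (‖w‖ + 1) * (((‖w‖ + 1) / (‖w‖ + 2)) ^ N * (C / (‖w‖ + 2))) := hstep
        _ = ((‖w‖ + 1) / (‖w‖ + 2)) ^ (N + 1) * C := by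
            rw [div_pow, div_pow, pow_succ]
            field_simp
            ring

/-- Lemma 4.6.  Let `f_n` be entire functions converging to `f`
uniformly on every compact subset of `ℂ`.  If the number of zeros of `f_n` in the closed
unit disk, counted with multiplicity (i.e. the sum of the vanishing orders
`∑_{z ∈ closedBall 0 1} ord_z(f_n)`), tends to `∞`, then `f ≡ 0`. -/
theorem statement11
    (f : ℕ → ℂ → ℂ) (g : ℂ → ℂ)
    (hf : ∀ n, Differentiable ℂ (f n))
    (hconv : ∀ K : Set ℂ, IsCompact K → TendstoUniformlyOn f g atTop K)
    (hz : ∀ N : ℕ, ∀ᶠ n in atTop,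
      (N : ℝ≥0∞) ≤
        ∑' z : closedBall (0 : ℂ) 1, ((analyticOrderAt (f n) z.1).toENNReal)) :
    ∀ z : ℂ, g z = 0 := by
  intro z
  have hc0 : (0 : ℝ) ≤ (‖z‖ + 1) / (‖z‖ + 2) := by positivity
  have hc1 : (‖z‖ + 1) / (‖z‖ + 2) < 1 := by
    rw [div_lt_one (by positivity)]
    linarith
  have hK : IsCompact (sphere (0 : ℂ) (‖z‖ + 3)) := isCompact_sphere _ _
  have hgc : ContinuousOn g (sphere (0 : ℂ) (‖z‖ + 3)) :=
    (hconv _ hK).continuousOn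
      (Filter.Eventually.of_forall fun n => (hf n).continuous.continuousOn).frequently
  obtain ⟨C₀, hC₀⟩ := hK.exists_bound_of_continuousOn hgc
  have hev1 : ∀ᶠ n in atTop, ∀ x ∈ sphere (0 : ℂ) (‖z‖ + 3), ‖f n x‖ ≤ C₀ + 1 := by
    have h1 := Metric.tendstoUniformlyOn_iff.mp (hconv _ hK) 1 one_pos
    filter_upwards [h1] with n hn x hx
    have h2 : dist (g x) (f n x) < 1 := hn x hx
    rw [dist_eq_norm] at h2
    have h3 := abs_le.mp (abs_norm_sub_norm_le (g x) (f n x))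
    have h4 := hC₀ x hx
    linarith [h3.1]
  have hpt : Tendsto (fun n => f n z) atTop (𝓝 (g z)) := by
    have h := Metric.tendstoUniformlyOn_iff.mp (hconv {z} isCompact_singleton)
    rw [Metric.tendsto_atTop]
    intro ε hε
    obtain ⟨Nn, hNn⟩ := eventually_atTop.mp (h ε hε)
    exact ⟨Nn, fun n hn => by rw [dist_comm]; exact hNn n hn z rfl⟩
  have key : ∀ ε > 0, ‖g z‖ ≤ ε := by
    intro ε hε
    obtain ⟨N, hN⟩ : ∃ N : ℕ, ((‖z‖ + 1) / (‖z‖ + 2)) ^ N * (C₀ + 1) < ε / 2 := by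
      have ht : Tendsto (fun N : ℕ => ((‖z‖ + 1) / (‖z‖ + 2)) ^ N * (C₀ + 1)) atTop (𝓝 0) := by
        simpa using (tendsto_pow_atTop_nhds_zero_of_lt_one hc0 hc1).mul_const (C₀ + 1)
      exact (ht.eventually (gt_mem_nhds (by positivity : (0 : ℝ) < ε / 2))).exists
    have hev3 : ∀ᶠ n in atTop, dist (f n z) (g z) < ε / 2 :=
      Metric.tendsto_nhds.mp hpt (ε / 2) (by positivity)
    obtain ⟨n, hn1, hn2, hn3⟩ := ((hz N).and (hev1.and hev3)).exists
    have hb := key_bound_stmt11 z N (f n) (hf n) (C₀ + 1) hn1 hn2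
    rw [dist_eq_norm] at hn3
    have h3 := abs_le.mp (abs_norm_sub_norm_le (f n z) (g z))
    linarith [h3.1]
  by_contra hne
  have hpos : 0 < ‖g z‖ := by
    simpa [norm_pos_iff] using hne
  have := key (‖g z‖ / 2) (by positivity)
  linarith
end

section
/- Let {(p_j, D_j, L_j)}_{j≥1} be a sequence of Hadamard triples on ℝ with p_j > 1, 0 ∈ D_j ⊂ ℕ and sup_j max{d/p_j : d ∈ D_j} < ∞. Fix n ≥ 1 and suppose there is an integer d > 1 such that for every j > n one has p_j = #D_j and d divides every element of D_j. Then the tail measure ν_n satisfies ν̂_n(1/d + k) = 0 for every k ∈ ℤ; that is, 1/d belongs to the integral periodic zero set Z(ν_n). In particular, {ν_n} admits no equi-positive subsequence. -/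
open MeasureTheory Filter Topology Set

section AuxEC

noncomputable def ec (x : ℝ) : ℂ := Complex.exp (2 * Real.pi * Complex.I * x)

lemma ec_add (x y : ℝ) : ec (x + y) = ec x * ec y := by
  rw [ec, ec, ec, ← Complex.exp_add]; congr 1; push_cast; ring

lemma ec_star (x : ℝ) : star (ec x) = ec (-x) := by
  rw [ec, ec, Complex.star_def, ← Complex.exp_conj]; congr 1
  simp only [map_mul, Complex.conj_I, Complex.conj_ofReal, map_ofNat, Complex.ofReal_neg]
  ring

lemma exp_eq_ec (z : ℤ) (p : ℕ) :
    Complex.exp (2 * Real.pi * Complex.I * ((z:ℤ):ℝ) / (p:ℝ)) = ec ((z:ℝ)/(p:ℝ)) := by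
  rw [ec]; congr 1; push_cast; ring

lemma ec_int (m : ℤ) : ec m = 1 := by
  rw [ec, show ((2:ℂ) * Real.pi * Complex.I * (m:ℝ)) = (m:ℤ) * (2 * Real.pi * Complex.I) by push_cast; ring]
  exact Complex.exp_int_mul_two_pi_mul_I m

lemma ec_pow (x : ℝ) (r : ℕ) : ec x ^ r = ec (r * x) := by
  rw [ec, ec, ← Complex.exp_nat_mul]; congr 1; push_cast; ring

lemma ec_ne_one {x : ℝ} (h : ∀ m : ℤ, x ≠ m) : ec x ≠ 1 := by
  intro hone
  rw [ec, Complex.exp_eq_one_iff] at hone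
  obtain ⟨m, hm⟩ := hone
  have h2 : (2:ℂ) * Real.pi * Complex.I ≠ 0 := by
    simp [Real.pi_ne_zero, Complex.I_ne_zero]
  have hx : (x : ℂ) = (m : ℂ) := by
    rw [mul_comm (m:ℂ) _] at hm
    exact mul_left_cancel₀ h2 hm
  exact h m (by exact_mod_cast hx)

lemma ec_eq_mod {x y : ℤ} {Nn : ℕ} (hN : 0 < Nn) (hdvd : (Nn:ℤ) ∣ x - y) :
    ec ((x:ℝ)/(Nn:ℝ)) = ec ((y:ℝ)/(Nn:ℝ)) := by
  obtain ⟨t, ht⟩ := hdvd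
  have hN' : (Nn:ℝ) ≠ 0 := by positivity
  have hxr : (x:ℝ) = y + Nn * t := by
    have : (x:ℝ) - y = Nn * t := by exact_mod_cast ht
    linarith
  rw [show (x:ℝ)/(Nn:ℝ) = (y:ℝ)/Nn + ((t:ℤ):ℝ) by rw [hxr]; field_simp]
  rw [ec_add, ec_int, mul_one]

lemma sum_ec_zero {Qn : ℕ} {M : ℤ} (hM : M ≠ 0) (h : M.natAbs < Qn) :
    ∑ r ∈ Finset.range Qn, ec ((r * M : ℤ) / (Qn:ℝ)) = 0 := by
  have hQ : 0 < Qn := lt_of_le_of_lt (Nat.zero_le _) h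
  have hQ' : (Qn:ℝ) ≠ 0 := by positivity
  have hterm : ∀ r : ℕ, ec ((r * M : ℤ) / (Qn:ℝ)) = ec ((M:ℝ)/Qn) ^ r := by
    intro r; rw [ec_pow]; congr 1; push_cast; ring
  have hne : ec ((M:ℝ)/Qn) ≠ 1 := by
    apply ec_ne_one
    intro m hm
    rw [div_eq_iff hQ'] at hm
    have hmz : M = m * Qn := by exact_mod_cast hm
    rcases eq_or_ne m 0 with rfl | hm0
    · simp at hmz; exact hM hmz
    · have h1 : (Qn:ℤ) ≤ |M| := by
        rw [hmz, abs_mul]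
        calc (Qn:ℤ) = 1 * |(Qn:ℤ)| := by simp
        _ ≤ |m| * |(Qn:ℤ)| := by
            apply mul_le_mul_of_nonneg_right _ (abs_nonneg _)
            exact Int.one_le_abs hm0
      have h2 : (Qn:ℤ) < Qn := lt_of_le_of_lt h1 (by rwa [Int.abs_eq_natAbs, Int.ofNat_lt])
      exact lt_irrefl _ h2
  calc ∑ r ∈ Finset.range Qn, ec ((r * M : ℤ) / (Qn:ℝ))
      = ∑ r ∈ Finset.range Qn, ec ((M:ℝ)/Qn) ^ r :=
        Finset.sum_congr rfl fun r _ => hterm r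
    _ = (ec ((M:ℝ)/Qn) ^ Qn - 1) / (ec ((M:ℝ)/Qn) - 1) := geom_sum_eq hne Qn
    _ = 0 := by
        rw [ec_pow, show (Qn:ℝ) * ((M:ℝ)/Qn) = ((M:ℤ):ℝ) by field_simp, ec_int]
        simp

lemma hasProd_zero_of_prod_range {f : ℕ → ℂ} {J : ℕ}
    (h : ∏ j ∈ Finset.range J, f j = 0) : HasProd f 0 := by
  rw [HasProd]
  have hev : ∀ᶠ s : Finset ℕ in Filter.atTop, ∏ i ∈ s, f i = 0 := by
    filter_upwards [Filter.eventually_ge_atTop (Finset.range J)] with s hs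
    rw [← Finset.prod_sdiff hs, h, mul_zero]
  exact Filter.Tendsto.congr' (hev.mono fun s hs => hs.symm) tendsto_const_nhds

end AuxEC

section AuxHadamard

lemma hadamard_inj (p : ℕ) (D L : Finset ℤ) (hH : IsHadamardTriple p D L)
    (hpD : (p:ℤ) = (D.card : ℤ)) :
    ∀ a ∈ D, ∀ a' ∈ D, (p:ℤ) ∣ a - a' → a = a' := by
  obtain ⟨hp, hDL, horth⟩ := hH
  have hp0 : 0 < p := by omega
  have hcard : Fintype.card {x // x ∈ D} = Fintype.card {x // x ∈ L} := by
    simp [Fintype.card_coe, hDL]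
  let e : {x // x ∈ D} ≃ {x // x ∈ L} := Fintype.equivOfCardEq hcard
  let H : Matrix {x // x ∈ D} {x // x ∈ D} ℂ :=
    fun x a => ec ((((e x : ℤ) * (a : ℤ) : ℤ) : ℝ) / (p:ℝ))
  have hHH : H * H.conjTranspose = (p:ℂ) • (1 : Matrix {x // x ∈ D} {x // x ∈ D} ℂ) := by
    ext x x'
    rw [Matrix.mul_apply]
    have hterm : ∀ a : {y // y ∈ D},
        H x a * H.conjTranspose a x' = ec (((((e x : ℤ) - (e x' : ℤ)) * (a:ℤ) : ℤ) : ℝ) / (p:ℝ)) := by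
      intro a
      rw [Matrix.conjTranspose_apply, ec_star, ← ec_add]
      congr 1
      push_cast
      ring
    rw [Finset.sum_congr rfl (fun a _ => hterm a)]
    by_cases hxx : x = x'
    · subst hxx
      have h1 : ∀ a : {y // y ∈ D},
          ec (((((e x : ℤ) - (e x : ℤ)) * (a:ℤ) : ℤ) : ℝ) / (p:ℝ)) = 1 := by
        intro a
        rw [show ((((e x : ℤ) - (e x : ℤ)) * (a:ℤ) : ℤ) : ℝ) = ((0:ℤ):ℝ) by push_cast; ring]
        simpa using ec_int 0
      rw [Finset.sum_congr rfl (fun a _ => h1 a)]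
      have hLp : L.card = p := by omega
      simp [Matrix.one_apply, Fintype.card_coe, ← hDL, hLp]
      omega
    · have hne : (e x : ℤ) ≠ (e x' : ℤ) := by
        intro hc
        exact hxx (e.injective (Subtype.ext hc))
      have h0 := horth (e x : ℤ) (e x).2 (e x' : ℤ) (e x').2 hne
      have h1 : ∑ a : {y // y ∈ D}, ec (((((e x : ℤ) - (e x' : ℤ)) * (a:ℤ) : ℤ) : ℝ) / (p:ℝ)) = 0 := by
        rw [← h0, ← Finset.sum_coe_sort D]
        exact Finset.sum_congr rfl (fun a _ => (exp_eq_ec _ p).symm)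
      rw [h1]
      simp [Matrix.one_apply, hxx]
  have hdet : H.det ≠ 0 := by
    intro h0
    have hd := congrArg Matrix.det hHH
    rw [Matrix.det_mul, Matrix.det_conjTranspose, Matrix.det_smul, Matrix.det_one, h0] at hd
    simp only [star_zero, mul_zero, mul_one, zero_mul] at hd
    have hpc : (p:ℂ) ≠ 0 := Nat.cast_ne_zero.mpr hp0.ne'
    exact pow_ne_zero _ hpc hd.symm
  intro a ha a' ha' hdvd
  by_contra hne
  apply hdet
  apply Matrix.det_zero_of_column_eq
    (i_ne_j := (Subtype.coe_ne_coe.mp hne : (⟨a, ha⟩ : {x // x ∈ D}) ≠ ⟨a', ha'⟩))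
  intro x
  show ec _ = ec _
  apply ec_eq_mod hp0
  rw [show (e x : ℤ) * a - (e x : ℤ) * a' = (e x : ℤ) * (a - a') by ring]
  exact Dvd.dvd.mul_left hdvd _

lemma step_lemma (p' : ℕ) (hp' : 1 < p') (D' : Finset ℤ) (hcard : (p':ℤ) = (D'.card:ℤ))
    (hinj : ∀ a ∈ D', ∀ a' ∈ D', (p':ℤ) ∣ a - a' → a = a')
    (d : ℤ) (hdvd : ∀ a ∈ D', d ∣ a)
    (Q' : ℕ) (hQ' : 0 < Q') (M : ℤ) :
    ∑ r ∈ Finset.range (Q' * p'), ec (((r * M : ℤ) : ℝ) / ((Q' * p' : ℕ):ℝ)) =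
    (∑ r ∈ Finset.range Q', ec (((r * M : ℤ) : ℝ) / ((Q':ℕ):ℝ))) *
    (∑ a ∈ D', ec (((a/d * M : ℤ) : ℝ) / ((Q' * p' : ℕ):ℝ))) := by
  set Nn := Q' * p' with hNn
  have hp0 : 0 < p' := by omega
  have hN : 0 < Nn := Nat.mul_pos hQ' hp0
  haveI : NeZero Nn := ⟨hN.ne'⟩
  have hDcard : D'.card = p' := by exact_mod_cast hcard.symm
  have hper : ∀ x y : ℤ, (Nn:ℤ) ∣ x - y →
      ec (((x * M : ℤ):ℝ) / (Nn:ℝ)) = ec (((y * M : ℤ):ℝ) / (Nn:ℝ)) := by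
    intro x y hxy
    exact ec_eq_mod hN (by rw [show x*M - y*M = (x-y)*M by ring]; exact hxy.mul_right M)
  set F : ZMod Nn → ℂ := fun z => ec ((((z.val : ℤ) * M : ℤ):ℝ) / (Nn:ℝ)) with hF
  have hFcast : ∀ x : ℤ, F (x : ZMod Nn) = ec (((x * M : ℤ):ℝ) / (Nn:ℝ)) := by
    intro x
    apply hper
    have hz : (((((x : ZMod Nn).val : ℤ) - x : ℤ)) : ZMod Nn) = 0 := by
      push_cast
      simp [ZMod.natCast_val, ZMod.cast_id]
    exact (ZMod.intCast_zmod_eq_zero_iff_dvd _ _).mp hz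
  have hLHS : ∑ r ∈ Finset.range Nn, ec (((r * M : ℤ):ℝ) / (Nn:ℝ)) = ∑ z : ZMod Nn, F z := by
    apply Finset.sum_nbij' (i := fun r => ((r : ℕ) : ZMod Nn)) (j := fun z => z.val)
    · intro r hr; exact Finset.mem_univ _
    · intro z hz; exact Finset.mem_range.mpr z.val_lt
    · intro r hr; exact ZMod.val_natCast_of_lt (Finset.mem_range.mp hr)
    · intro z hz; simp [ZMod.natCast_val, ZMod.cast_id]
    · intro r hr
      have h1 := hFcast (r : ℤ)
      rw [show (((r:ℕ):ℤ) : ZMod Nn) = ((r:ℕ) : ZMod Nn) by push_cast; ring] at h1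
      exact h1.symm
  let g : Fin Q' × {a // a ∈ D'} → ZMod Nn :=
    fun w => (((w.1 : ℤ) * (p':ℤ) + (w.2 : ℤ)/d : ℤ) : ZMod Nn)
  have hb : ∀ a : {a // a ∈ D'}, d * ((a:ℤ)/d) = (a:ℤ) :=
    fun a => Int.mul_ediv_cancel' (hdvd a a.2)
  have hginj : Function.Injective g := by
    rintro ⟨s, a⟩ ⟨s', a'⟩ hg
    have hmod : ((Nn:ℕ):ℤ) ∣ ((s':ℤ) * p' + (a':ℤ)/d) - ((s:ℤ) * p' + (a:ℤ)/d) :=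
      ((ZMod.intCast_eq_intCast_iff _ _ _).mp hg).dvd
    have hpN : (p':ℤ) ∣ (Nn:ℤ) := by exact_mod_cast Dvd.intro_left Q' rfl
    have hpdvd : (p':ℤ) ∣ (a':ℤ)/d - (a:ℤ)/d := by
      have h1 : (p':ℤ) ∣ ((s':ℤ) * p' + (a':ℤ)/d) - ((s:ℤ) * p' + (a:ℤ)/d) :=
        hpN.trans hmod
      have h2 : ((s':ℤ) * p' + (a':ℤ)/d) - ((s:ℤ) * p' + (a:ℤ)/d)
          = ((s':ℤ) - s) * p' + ((a':ℤ)/d - (a:ℤ)/d) := by ring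
      rw [h2] at h1
      exact (dvd_add_right (Dvd.dvd.mul_left dvd_rfl _)).mp h1
    have haa : (a':ℤ) = (a:ℤ) := by
      apply hinj _ a'.2 _ a.2
      have h3 : (a':ℤ) - (a:ℤ) = d * ((a':ℤ)/d - (a:ℤ)/d) := by
        rw [mul_sub, hb a', hb a]
      rw [h3]
      exact hpdvd.mul_left d
    have ha : a = a' := Subtype.ext haa.symm
    subst ha
    have hs : ((s':ℤ) - s) * p' = ((s':ℤ) * p' + (a:ℤ)/d) - ((s:ℤ) * p' + (a:ℤ)/d) := by ring
    have hQdvd : (Q':ℤ) ∣ (s':ℤ) - s := by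
      have h4 : ((Q':ℤ) * p') ∣ ((s':ℤ) - s) * p' := by
        rw [hs]; exact_mod_cast hmod
      exact (mul_dvd_mul_iff_right (by exact_mod_cast hp0.ne' : (p':ℤ) ≠ 0)).mp h4
    have hs0 : (s':ℤ) - s = 0 := by
      apply Int.eq_zero_of_abs_lt_dvd hQdvd
      have h1 : (s:ℤ) < Q' := by exact_mod_cast s.2
      have h2 : (s':ℤ) < Q' := by exact_mod_cast s'.2
      have h3 : (0:ℤ) ≤ s := by positivity
      have h4 : (0:ℤ) ≤ s' := by positivity
      rw [abs_lt]; constructor <;> linarith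
    have hss : s = s' := by
      apply Fin.ext
      have h5 : (s:ℤ) = (s':ℤ) := by linarith [sub_eq_zero.mp hs0]
      exact_mod_cast h5
    simp [hss]
  have hgbij : Function.Bijective g := by
    rw [Fintype.bijective_iff_injective_and_card]
    refine ⟨hginj, ?_⟩
    simp [ZMod.card, Fintype.card_coe, hDcard, hNn]
  have hZ : ∑ z : ZMod Nn, F z = ∑ w : Fin Q' × {a // a ∈ D'}, F (g w) :=
    (Fintype.sum_bijective g hgbij _ _ (fun w => rfl)).symm
  have hterm : ∀ w : Fin Q' × {a // a ∈ D'},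
      F (g w) = ec ((((w.1 : ℕ) * M : ℤ):ℝ) / (Q':ℝ)) * ec ((((w.2:ℤ)/d * M : ℤ):ℝ) / (Nn:ℝ)) := by
    rintro ⟨s, a⟩
    rw [hFcast, ← ec_add]
    congr 1
    have hQ'0 : (Q':ℝ) ≠ 0 := by positivity
    have hp'0 : (p':ℝ) ≠ 0 := by positivity
    have hNreal : ((Nn:ℕ):ℝ) = (Q':ℝ) * (p':ℝ) := by push_cast [hNn]; ring
    rw [hNreal]
    push_cast
    field_simp
  rw [hLHS, hZ, Finset.sum_congr rfl (fun w _ => hterm w)]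
  rw [Fintype.sum_prod_type]
  have hbeta : ∀ x : Fin Q', ∀ y : {a // a ∈ D'},
      ec ((((x, y).1 : ℕ) * M : ℤ) / (Q':ℝ)) * ec ((((x, y).2:ℤ)/d * M : ℤ) / (Nn:ℝ))
      = ec (((x : ℕ) * M : ℤ) / (Q':ℝ)) * ec (((y:ℤ)/d * M : ℤ) / (Nn:ℝ)) := fun _ _ => rfl
  rw [Finset.sum_congr rfl (fun x _ => Finset.sum_congr rfl (fun y _ => hbeta x y))]
  simp only [← Finset.mul_sum]
  rw [← Finset.sum_mul]
  congr 1
  · rw [← Fin.sum_univ_eq_sum_range (fun r => ec ((((r:ℤ) * M : ℤ):ℝ) / (Q':ℝ)))]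
  · exact Finset.sum_coe_sort D' (fun a => ec ((((a:ℤ)/d * M : ℤ):ℝ) / ((Nn:ℕ):ℝ)))

lemma key_prod (p : ℕ → ℕ) (D L : ℕ → Finset ℤ)
    (hHad : ∀ n, IsHadamardTriple (p n) (D n) (L n))
    (N : ℕ) (d : ℤ) (hd : 1 < d)
    (h : ∀ j, N ≤ j → (p j : ℤ) = ((D j).card : ℤ) ∧ ∀ a ∈ D j, d ∣ a) (M : ℤ) :
    ∀ J : ℕ,
      ∏ j ∈ Finset.range J,
        (∑ a ∈ D (N + j), ec (((a/d * M : ℤ):ℝ) / ((∏ i ∈ Finset.Ico N (N + j + 1), p i : ℕ):ℝ)))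
      = ∑ r ∈ Finset.range (∏ i ∈ Finset.Ico N (N + J), p i),
          ec (((r * M : ℤ):ℝ) / ((∏ i ∈ Finset.Ico N (N + J), p i : ℕ):ℝ)) := by
  intro J
  induction J with
  | zero =>
      rw [Nat.add_zero, Finset.Ico_self, Finset.prod_empty, Finset.prod_range_zero,
        Finset.sum_range_one]
      norm_num
      exact ((by simpa using ec_int 0) : ec (0:ℝ) = 1).symm
  | succ J ih =>
      have hQpos : 0 < ∏ i ∈ Finset.Ico N (N + J), p i :=
        Finset.prod_pos (fun i _ => lt_trans one_pos (hHad i).1)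
      have hsplit : ∏ i ∈ Finset.Ico N (N + J + 1), p i
          = (∏ i ∈ Finset.Ico N (N + J), p i) * p (N + J) :=
        Finset.prod_Ico_succ_top (Nat.le_add_right N J) _
      rw [Finset.prod_range_succ, ih, show N + (J + 1) = N + J + 1 by omega, hsplit]
      obtain ⟨hcard, hdvd⟩ := h (N + J) (Nat.le_add_right N J)
      exact (step_lemma (p (N + J)) (hHad (N + J)).1 (D (N + J)) hcard
        (hadamard_inj _ _ _ (hHad (N + J)) hcard) d hdvd _ hQpos M).symm

lemma tail_zero (p : ℕ → ℕ) (D L : ℕ → Finset ℤ)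
    (hHad : ∀ n, IsHadamardTriple (p n) (D n) (L n))
    (ν : ℕ → MeasureTheory.Measure ℝ) (hν : ∀ n, IsTail p D n (ν n))
    (N : ℕ) (d : ℤ) (hd : 1 < d)
    (h : ∀ j, N ≤ j → (p j : ℤ) = ((D j).card : ℤ) ∧ ∀ a ∈ D j, d ∣ a) :
    ∀ k : ℤ, ftR (ν N) ((1:ℝ)/(d:ℝ) + (k:ℝ)) = 0 := by
  intro k
  rw [(hν N).2]
  set M : ℤ := 1 + d * k with hMdef
  have hM0 : M ≠ 0 := by
    intro h0
    have h0' : 1 + d * k = 0 := by rw [hMdef] at h0; exact h0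
    have h1 : d ∣ 1 := ⟨-k, by linear_combination h0'⟩
    have h2 := Int.le_of_dvd one_pos h1
    omega
  obtain ⟨J, hJ⟩ : ∃ J : ℕ, M.natAbs < ∏ i ∈ Finset.Ico N (N + J), p i := by
    refine ⟨M.natAbs, ?_⟩
    have h1 : M.natAbs < 2 ^ M.natAbs := Nat.lt_two_pow_self
    have h2 : 2 ^ M.natAbs ≤ ∏ i ∈ Finset.Ico N (N + M.natAbs), p i := by
      calc 2 ^ M.natAbs = ∏ _i ∈ Finset.Ico N (N + M.natAbs), 2 := by
            rw [Finset.prod_const, Nat.card_Ico]; congr 1; omega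
        _ ≤ ∏ i ∈ Finset.Ico N (N + M.natAbs), p i :=
            Finset.prod_le_prod' (fun i _ => (hHad i).1)
    omega
  apply HasProd.tprod_eq
  apply hasProd_zero_of_prod_range (J := J)
  have hd0 : (d:ℝ) ≠ 0 := by
    have : (1:ℝ) < (d:ℝ) := by exact_mod_cast hd
    linarith
  have hfac : ∀ j : ℕ,
      dHat (D (N + j)) (((1:ℝ)/(d:ℝ) + (k:ℝ)) / ∏ i ∈ Finset.Ico N (N + j + 1), (p i : ℝ))
      = ((D (N + j)).card : ℂ)⁻¹ *
        ∑ a ∈ D (N + j), ec (((a/d * M : ℤ):ℝ) / ((∏ i ∈ Finset.Ico N (N + j + 1), p i : ℕ):ℝ)) := by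
    intro j
    rw [dHat]
    congr 1
    apply Finset.sum_congr rfl
    intro a ha
    obtain ⟨b, hbeq⟩ := (h (N + j) (Nat.le_add_right N j)).2 a ha
    have hab : a / d = b := by
      rw [hbeq]
      exact Int.mul_ediv_cancel_left b (by omega)
    have hQpos : 0 < ∏ i ∈ Finset.Ico N (N + j + 1), p i :=
      Finset.prod_pos (fun i _ => lt_trans one_pos (hHad i).1)
    have hQR : (∏ i ∈ Finset.Ico N (N + j + 1), (p i : ℝ))
        = ((∏ i ∈ Finset.Ico N (N + j + 1), p i : ℕ):ℝ) := by
      push_cast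
      rfl
    have hQn0 : ((∏ i ∈ Finset.Ico N (N + j + 1), p i : ℕ):ℝ) ≠ 0 := by positivity
    have harg : ((a:ℤ):ℝ) * ((((1:ℝ)/(d:ℝ) + (k:ℝ))) / ∏ i ∈ Finset.Ico N (N + j + 1), (p i : ℝ))
        = ((a/d * M : ℤ):ℝ) / ((∏ i ∈ Finset.Ico N (N + j + 1), p i : ℕ):ℝ) := by
      have hX : (d:ℝ) * (b:ℝ) * ((1:ℝ)/(d:ℝ) + (k:ℝ)) = (b:ℝ) * (1 + (d:ℝ)*(k:ℝ)) := by
        field_simp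
      rw [hab, hbeq, hMdef, hQR]
      push_cast
      rw [← mul_div_assoc, hX]
    have e1 : Complex.exp (2 * Real.pi * Complex.I * ((a:ℤ):ℝ) *
        ((((1:ℝ)/(d:ℝ) + (k:ℝ)) / ∏ i ∈ Finset.Ico N (N + j + 1), (p i : ℝ)) : ℝ))
        = ec (((a:ℤ):ℝ) * (((1:ℝ)/(d:ℝ) + (k:ℝ)) / ∏ i ∈ Finset.Ico N (N + j + 1), (p i : ℝ))) := by
      rw [ec]
      congr 1
      push_cast
      ring
    rw [e1, harg]
  rw [Finset.prod_congr rfl (fun j _ => hfac j), Finset.prod_mul_distrib,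
    key_prod p D L hHad N d hd h M J, sum_ec_zero hM0 hJ, mul_zero]

end AuxHadamard

/-- proof of (i) ⇒ (ii) of Theorem 2.1.  Fix `n` and suppose there is an
integer `d > 1` such that, for every tail index `j` of `ν_n`, `p_j = #D_j` and
`d` divides every element of `D_j`.  Then `ν̂_n(1/d + k) = 0` for every `k ∈ ℤ`, i.e.
`1/d ∈ Z(ν_n)`; in particular `{ν_n}` admits no equi-positive subsequence
(0-indexed: `p j`, `D j`, `ν j` stand for `p_{j+1}`, `D_{j+1}`, `ν_j`). -/
theorem statement14
    (p : ℕ → ℕ) (D L : ℕ → Finset ℤ)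
    (hHad : ∀ n, IsHadamardTriple (p n) (D n) (L n))
    (hD0 : ∀ n, (0 : ℤ) ∈ D n)
    (hDpos : ∀ n, ∀ d ∈ D n, 0 ≤ d)
    (hbd : ∃ C : ℝ, ∀ n, ∀ d ∈ D n, (d : ℝ) / (p n : ℝ) ≤ C)
    (ν : ℕ → Measure ℝ) (hν : ∀ n, IsTail p D n (ν n))
    (n : ℕ) (d : ℤ) (hd : 1 < d)
    (h : ∀ j, n ≤ j → (p j : ℤ) = (D j).card ∧ ∀ a ∈ D j, d ∣ a) :
    (∀ k : ℤ, ftR (ν n) ((1 : ℝ) / (d : ℝ) + (k : ℝ)) = 0) ∧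
      ¬ ∃ nk : ℕ → ℕ, StrictMono nk ∧ EquiPositive (fun k => ν (nk k)) := by
  constructor
  · exact tail_zero p D L hHad ν hν n d hd h
  · rintro ⟨nk, hmono, ε, hε, hEP⟩
    have hd1 : (1:ℝ) < (d:ℝ) := by exact_mod_cast hd
    have hmem : (1:ℝ)/(d:ℝ) ∈ Set.Ico (0:ℝ) 1 := by
      constructor
      · positivity
      · rw [div_lt_one (by linarith)]
        linarith
    obtain ⟨m, hm⟩ := hEP ((1:ℝ)/(d:ℝ)) hmem n
    have h0 : ftR (ν (nk n)) ((1:ℝ)/(d:ℝ) + (m:ℝ)) = 0 :=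
      tail_zero p D L hHad ν hν (nk n) d hd
        (fun j hj => h j (le_trans hmono.le_apply hj)) m
    simp only [h0] at hm
    simp at hm
    linarith
end

section
/- There exist constants C > 0 and β > 0 such that for every real x with |x| > 1 and every y ∈ ℝ, ∏_{j=1}^∞ (1/3)|1 + e^{2πi·2y/9^j} + e^{2πi(4/9)^j x}| ≤ C (ln|x|)^{-β}. -/
open Filter Topology

namespace Statement19Aux

/-- For a sequence with values in `[0,1]`, the infinite product is bounded by any
finite subproduct. -/
lemma tprod_le_finset_prod (f : ℕ → ℝ) (h0 : ∀ i, 0 ≤ f i) (h1 : ∀ i, f i ≤ 1)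
    (S : Finset ℕ) : (∏' i, f i) ≤ ∏ i ∈ S, f i := by
  classical
  set A : Finset ℕ → ℝ := fun T => ∏ i ∈ T, f i with hA
  have hanti : Antitone A := by
    intro T U hTU
    have hsd := Finset.prod_sdiff (f := f) hTU
    have h1' : (∏ i ∈ U \ T, f i) ≤ 1 :=
      Finset.prod_le_one (fun i _ => h0 i) (fun i _ => h1 i)
    have h0' : 0 ≤ ∏ i ∈ T, f i := Finset.prod_nonneg fun i _ => h0 i
    have : A U = (∏ i ∈ U \ T, f i) * A T := by rw [hA]; exact hsd.symm
    rw [this]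
    nlinarith
  have hbdd : BddBelow (Set.range A) := by
    refine ⟨0, ?_⟩
    rintro _ ⟨T, rfl⟩
    exact Finset.prod_nonneg fun i _ => h0 i
  have hp : HasProd f (⨅ T, A T) := tendsto_atTop_ciInf hanti hbdd
  rw [hp.tprod_eq]
  exact ciInf_le hbdd S

lemma cos_bound (b : ℝ) (h : 1/14 ≤ |b - round b|) : Real.cos (2 * Real.pi * b) ≤ 23/25 := by
  have hπ1 : 3.141592 < Real.pi := Real.pi_gt_d6
  have hπ2 : Real.pi < 3.15 := Real.pi_lt_d2
  set m : ℤ := round b with hm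
  have hd2 : |b - (m:ℝ)| ≤ 1/2 := abs_sub_round b
  have h1 : Real.cos (2*Real.pi*b) = Real.cos (2*Real.pi*(b - m)) := by
    have e : 2*Real.pi*b = 2*Real.pi*(b - m) + (m:ℝ) * (2*Real.pi) := by ring
    rw [e, Real.cos_add_int_mul_two_pi]
  have h2 : Real.cos (2*Real.pi*(b - m)) = Real.cos (2*Real.pi*|b - (m:ℝ)|) := by
    rcases abs_cases (b - (m:ℝ)) with ⟨he, _⟩ | ⟨he, _⟩
    · rw [he]
    · rw [he, show 2*Real.pi*-(b-(m:ℝ)) = -(2*Real.pi*(b-(m:ℝ))) by ring, Real.cos_neg]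
  have h3 : Real.cos (2*Real.pi*|b - (m:ℝ)|) ≤ Real.cos (2*Real.pi*(1/14)) := by
    apply Real.cos_le_cos_of_nonneg_of_le_pi (by positivity) (by nlinarith [abs_nonneg (b - (m:ℝ))])
    nlinarith
  have h4 : Real.cos (2*Real.pi*(1/14)) ≤ 23/25 := by
    have hs : (1:ℝ)/5 ≤ Real.sin (Real.pi/14) := by
      have ha : (0.224:ℝ) ≤ Real.pi/14 := by nlinarith
      have hb : Real.pi/14 ≤ 0.225 := by nlinarith
      have h5 := Real.sin_gt_sub_cube (x := Real.pi/14) (by positivity)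
      have hc3 : (Real.pi/14)^3 ≤ (0.225:ℝ)^3 :=
        pow_le_pow_left₀ (by positivity) hb 3
      nlinarith
    have e : 2*Real.pi*(1/14) = 2 * (Real.pi/14) := by ring
    rw [e, Real.cos_two_mul']
    nlinarith [Real.sin_sq_add_cos_sq (Real.pi/14)]
  linarith

lemma abs_one_add_exp (b : ℝ) :
    ‖(1 + Complex.exp (2 * Real.pi * Complex.I * (b:ℂ)))‖ =
      Real.sqrt (2 + 2 * Real.cos (2 * Real.pi * b)) := by
  have h1 : 2 * Real.pi * Complex.I * (b:ℂ) = ((2*Real.pi*b : ℝ) : ℂ) * Complex.I := by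
    push_cast; ring
  rw [h1, Complex.exp_mul_I]
  set θ := 2*Real.pi*b with hθ
  rw [show Complex.cos ((θ:ℝ):ℂ) = ((Real.cos θ : ℝ):ℂ) from (Complex.ofReal_cos θ).symm,
    show Complex.sin ((θ:ℝ):ℂ) = ((Real.sin θ : ℝ):ℂ) from (Complex.ofReal_sin θ).symm]
  have e : (1:ℂ) + (((Real.cos θ : ℝ):ℂ) + ((Real.sin θ : ℝ):ℂ) * Complex.I)
      = ((1 + Real.cos θ : ℝ):ℂ) + ((Real.sin θ : ℝ):ℂ) * Complex.I := by
    push_cast; ring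
  rw [e, Complex.norm_add_mul_I]
  congr 1
  nlinarith [Real.sin_sq_add_cos_sq θ]

lemma abs_exp_pi_I (a : ℝ) : ‖(Complex.exp (2 * Real.pi * Complex.I * (a:ℂ)))‖ = 1 := by
  have h1 : 2 * Real.pi * Complex.I * (a:ℂ) = ((2*Real.pi*a : ℝ) : ℂ) * Complex.I := by
    push_cast; ring
  rw [h1, Complex.norm_exp_ofReal_mul_I]

lemma factor_le_one (a b : ℝ) :
    (1/3 : ℝ) * ‖(1 + Complex.exp (2 * Real.pi * Complex.I * (a:ℂ)) +
      Complex.exp (2 * Real.pi * Complex.I * (b:ℂ)))‖ ≤ 1 := by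
  have h1 : ‖(1 + Complex.exp (2 * Real.pi * Complex.I * (a:ℂ)) +
      Complex.exp (2 * Real.pi * Complex.I * (b:ℂ)))‖ ≤ 3 := by
    calc ‖(1 + Complex.exp (2 * Real.pi * Complex.I * (a:ℂ)) +
          Complex.exp (2 * Real.pi * Complex.I * (b:ℂ)))‖
        ≤ ‖(1 + Complex.exp (2 * Real.pi * Complex.I * (a:ℂ)))‖ +
          ‖(Complex.exp (2 * Real.pi * Complex.I * (b:ℂ)))‖ :=
          norm_add_le _ _
      _ ≤ (‖(1:ℂ)‖ + ‖(Complex.exp (2 * Real.pi * Complex.I * (a:ℂ)))‖) +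
          ‖(Complex.exp (2 * Real.pi * Complex.I * (b:ℂ)))‖ := by
          gcongr; exact norm_add_le _ _
      _ = 3 := by rw [abs_exp_pi_I, abs_exp_pi_I, norm_one]; norm_num
  linarith

lemma factor_le_c (a b : ℝ) (hb : 1/14 ≤ |b - round b|) :
    (1/3 : ℝ) * ‖(1 + Complex.exp (2 * Real.pi * Complex.I * (a:ℂ)) +
      Complex.exp (2 * Real.pi * Complex.I * (b:ℂ)))‖ ≤ 99/100 := by
  set u := Complex.exp (2 * Real.pi * Complex.I * (a:ℂ)) with hu
  set v := Complex.exp (2 * Real.pi * Complex.I * (b:ℂ)) with hv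
  have e : (1:ℂ) + u + v = u + (1 + v) := by ring
  have h1 : ‖(1 + u + v)‖ ≤ 1 + Real.sqrt (2 + 2 * Real.cos (2*Real.pi*b)) := by
    rw [e]
    calc ‖(u + (1 + v))‖ ≤ ‖u‖ + ‖(1 + v)‖ :=
          norm_add_le _ _
      _ = 1 + Real.sqrt (2 + 2 * Real.cos (2*Real.pi*b)) := by
          rw [hu, abs_exp_pi_I, hv, abs_one_add_exp]
  have h2 : Real.cos (2*Real.pi*b) ≤ 23/25 := cos_bound b hb
  have h3 : Real.sqrt (2 + 2 * Real.cos (2*Real.pi*b)) ≤ 1.97 := by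
    calc Real.sqrt (2 + 2 * Real.cos (2*Real.pi*b)) ≤ Real.sqrt ((1.97:ℝ)^2) := by
          apply Real.sqrt_le_sqrt; nlinarith
      _ = 1.97 := Real.sqrt_sq (by norm_num)
  linarith

/-- The `x`-part of the exponent at index `j`. -/
noncomputable def bx (x : ℝ) (j : ℕ) : ℝ := (4/9 : ℝ)^(j+1) * x

lemma run (x : ℝ) : ∀ (L p : ℕ),
    (∀ k, k ≤ L → |bx x (p+k) - round (bx x (p+k))| < 1/14) →
    (9:ℤ)^L ∣ round (bx x p) := by
  intro L
  induction L with
  | zero => intro p _; simpa using one_dvd _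
  | succ L IH =>
    intro p h
    have IH' : (9:ℤ)^L ∣ round (bx x (p+1)) := by
      apply IH (p+1)
      intro k hk
      have := h (k+1) (by omega)
      rwa [show p + (k+1) = p + 1 + k by omega] at this
    set m := round (bx x p) with hmdef
    set m' := round (bx x (p+1)) with hm'def
    have hb : bx x (p+1) * 9 = 4 * bx x p := by
      unfold bx
      rw [show p + 1 + 1 = (p+1) + 1 by rfl, pow_succ]
      ring
    have h0 := h 0 (by omega)
    have h1 := h 1 (by omega)
    rw [show p + 0 = p by omega] at h0
    rw [abs_lt] at h0 h1
    have hz : 4 * m = 9 * m' := by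
      have habs : |((4*m - 9*m' : ℤ) : ℝ)| < 1 := by
        have key : ((4*m - 9*m' : ℤ) : ℝ)
            = 9*(bx x (p+1) - (m':ℝ)) - 4*(bx x p - (m:ℝ)) := by
          push_cast
          nlinarith [hb]
        rw [key, abs_lt]
        constructor <;> nlinarith [h0.1, h0.2, h1.1, h1.2]
      by_contra hne
      have h1le : (1:ℤ) ≤ |4*m - 9*m'| := Int.one_le_abs (by omega)
      have : (1:ℝ) ≤ |((4*m - 9*m' : ℤ) : ℝ)| := by
        rw [← Int.cast_abs]
        exact_mod_cast h1le
      linarith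
    have h9 : (9:ℤ)^(L+1) ∣ m * 4 := by
      have e : m * 4 = 9 * m' := by omega
      rw [e, pow_succ]
      obtain ⟨t, ht⟩ := IH'
      exact ⟨t, by rw [ht]; ring⟩
    have hcop : IsCoprime ((9:ℤ)^(L+1)) 4 := by
      apply IsCoprime.pow_left
      rw [Int.isCoprime_iff_gcd_eq_one]
      decide
    exact hcop.dvd_of_dvd_mul_right h9

/-- The doubly-exponential threshold sequence. -/
def ell : ℕ → ℕ
  | 0 => 1
  | n+1 => 2 * ell n + 10

lemma ell_le (n : ℕ) : (ell n : ℝ) ≤ 11 * 2^n := by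
  have h : ∀ n, (ell n : ℝ) ≤ 11 * 2^n - 10 := by
    intro n
    induction n with
    | zero => norm_num [ell]
    | succ n ih =>
      have e : (ell (n+1) : ℝ) = 2 * (ell n : ℝ) + 10 := by
        rw [show ell (n+1) = 2 * ell n + 10 from rfl]; push_cast; ring
      rw [e, pow_succ]
      linarith
  linarith [h n]

lemma ell_pos (n : ℕ) : 1 ≤ ell n := by
  cases n with
  | zero => simp [ell]
  | succ n => rw [show ell (n+1) = 2 * ell n + 10 from rfl]; omega

lemma count (x : ℝ) : ∀ (n p : ℕ), (9:ℝ)^(ell n) ≤ |bx x p| →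
    ∃ S : Finset ℕ, S.card = n ∧
      ∀ j ∈ S, p ≤ j ∧ 1/14 ≤ |bx x j - round (bx x j)| := by
  intro n
  induction n with
  | zero => exact fun p _ => ⟨∅, by simp⟩
  | succ n IH =>
    intro p hp
    classical
    set Bp := |bx x p| with hBp
    have h9big : (1:ℝ) < (9:ℝ)^(ell (n+1)) :=
      one_lt_pow₀ (by norm_num) (by have := ell_pos (n+1); omega)
    have hBpos : (1:ℝ) < Bp := lt_of_lt_of_le h9big hp
    have hPex : ∃ L : ℕ, 2 * Bp < (9:ℝ)^L := pow_unbounded_of_one_lt _ (by norm_num)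
    set L := Nat.find hPex with hLdef
    have hL : 2 * Bp < (9:ℝ)^L := Nat.find_spec hPex
    have hLmin : ∀ K, K < L → (9:ℝ)^K ≤ 2*Bp := fun K hK => not_lt.mp (Nat.find_min hPex hK)
    have hgt : ell (n+1) < L := by
      by_contra hle
      push_neg at hle
      have h1 : (9:ℝ)^L ≤ (9:ℝ)^(ell (n+1)) := pow_le_pow_right₀ (by norm_num) hle
      nlinarith
    have hgood : ∃ k, k ≤ L ∧ 1/14 ≤ |bx x (p+k) - round (bx x (p+k))| := by
      by_contra hbad
      push_neg at hbad
      have hdvd := run x L p (fun k hk => hbad k hk)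
      set m := round (bx x p) with hmdef
      have hbad0 := hbad 0 (Nat.zero_le _)
      rw [show p + 0 = p by omega] at hbad0
      have hm0 : m ≠ 0 := by
        intro h0
        rw [← hmdef, h0] at hbad0
        simp only [Int.cast_zero, sub_zero] at hbad0
        have hBpos' : 1 < |bx x p| := hBp ▸ hBpos
        linarith
      have h9L : (9:ℝ)^L ≤ |(m:ℝ)| := by
        have hd : (9:ℤ)^L ∣ |m| := (dvd_abs _ _).mpr hdvd
        have := Int.le_of_dvd (abs_pos.mpr hm0) hd
        calc (9:ℝ)^L = (((9:ℤ)^L : ℤ) : ℝ) := by push_cast; ring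
          _ ≤ ((|m| : ℤ) : ℝ) := by exact_mod_cast this
          _ = |(m:ℝ)| := by push_cast; ring
      have hmB : |(m:ℝ)| ≤ Bp + 1/14 := by
        rw [abs_lt] at hbad0
        rw [abs_le]
        constructor <;>
          [nlinarith [neg_abs_le (bx x p), le_abs_self (bx x p)];
           nlinarith [neg_abs_le (bx x p), le_abs_self (bx x p)]]
      nlinarith
    obtain ⟨k, hkL, hk⟩ := hgood
    have hL1 : 2 * ell n + 11 ≤ L := by
      have : ell (n+1) = 2 * ell n + 10 := rfl
      omega
    have hnext : (9:ℝ)^(ell n) ≤ |bx x (p+L+1)| := by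
      have hmin : (9:ℝ)^(L-1) ≤ 2 * Bp := hLmin (L-1) (by omega)
      have hbnext : |bx x (p+L+1)| = (4/9:ℝ)^(L+1) * Bp := by
        rw [hBp]
        unfold bx
        rw [abs_mul, abs_mul, abs_of_pos (show (0:ℝ) < (4/9:ℝ)^(p+L+1+1) by positivity),
          abs_of_pos (show (0:ℝ) < (4/9:ℝ)^(p+1) by positivity),
          show p+L+1+1 = (L+1) + (p+1) by omega, pow_add]
        ring
      have h9e : (9:ℝ)^(L+1) = (9:ℝ)^(L-1) * 81 := by
        rw [show L+1 = (L-1) + 2 by omega, pow_add]; norm_num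
      have hstep : (4:ℝ)^(L+1) / 162 ≤ (4/9:ℝ)^(L+1) * Bp := by
        have hBlow : (9:ℝ)^(L-1) / 2 ≤ Bp := by linarith
        have hpos : (0:ℝ) < (4/9:ℝ)^(L+1) := by positivity
        have := mul_le_mul_of_nonneg_left hBlow (le_of_lt hpos)
        calc (4:ℝ)^(L+1) / 162 = (4/9:ℝ)^(L+1) * ((9:ℝ)^(L-1)/2) := by
              rw [div_pow, h9e]; field_simp; ring
          _ ≤ (4/9:ℝ)^(L+1) * Bp := this
      have h4big : (162:ℝ) * 9^(ell n) ≤ 4^(L+1) := by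
        have h16 : (9:ℝ)^(ell n) ≤ 16^(ell n) := pow_le_pow_left₀ (by norm_num) (by norm_num) _
        have h412 : ((162:ℝ)) * 16^(ell n) ≤ 4^12 * 16^(ell n) := by
          have : (0:ℝ) ≤ 16^(ell n) := by positivity
          nlinarith
        calc (162:ℝ) * 9^(ell n) ≤ 162 * 16^(ell n) := by
              have : (0:ℝ) ≤ 162 := by norm_num
              nlinarith
          _ ≤ 4^12 * 16^(ell n) := h412
          _ = 4^(2*ell n + 12) := by
              rw [pow_add, pow_mul]; norm_num; ring
          _ ≤ 4^(L+1) := pow_le_pow_right₀ (by norm_num) (by omega)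
      rw [hbnext]
      calc (9:ℝ)^(ell n) ≤ (4:ℝ)^(L+1)/162 := by linarith
        _ ≤ (4/9:ℝ)^(L+1) * Bp := hstep
    obtain ⟨S', hcard, hS'⟩ := IH (p+L+1) hnext
    have hnotmem : p + k ∉ S' := by
      intro hmem
      have := (hS' _ hmem).1
      omega
    refine ⟨insert (p+k) S', ?_, ?_⟩
    · rw [Finset.card_insert_of_notMem hnotmem, hcard]
    · intro j hj
      rcases Finset.mem_insert.mp hj with rfl | hj'
      · exact ⟨by omega, hk⟩
      · exact ⟨by have := (hS' _ hj').1; omega, (hS' _ hj').2⟩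

end Statement19Aux

open Statement19Aux

/-- Claim 1 in the proof of Example 6.1.  There exist constants
`C > 0` and `β > 0` such that for all real `x` with `|x| > 1` and all `y ∈ ℝ`,
`∏_{j=1}^∞ (1/3)|1 + e^{2πi·2y/9ʲ} + e^{2πi(4/9)ʲx}| ≤ C (ln|x|)^{-β}`. -/
theorem statement19 :
    ∃ C : ℝ, 0 < C ∧ ∃ β : ℝ, 0 < β ∧
      ∀ x y : ℝ, 1 < |x| →
        (∏' j : ℕ, (1 / 3 : ℝ) *
            ‖(1 +
              Complex.exp (2 * Real.pi * Complex.I * ((2 * y / 9 ^ (j + 1) : ℝ) : ℂ)) +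
              Complex.exp (2 * Real.pi * Complex.I * (((4 / 9 : ℝ) ^ (j + 1) * x : ℝ) : ℂ)))‖) ≤
          C * Real.log |x| ^ (-β) := by
  have hlog2pos : (0:ℝ) < Real.log 2 := Real.log_pos one_lt_two
  have hγpos : (0:ℝ) < Real.log (100/99) := Real.log_pos (by norm_num)
  set β : ℝ := Real.log (100/99) / Real.log 2 with hβdef
  have hβpos : 0 < β := div_pos hγpos hlog2pos
  have hβ1 : β ≤ 1 := by
    rw [hβdef, div_le_one hlog2pos]
    exact Real.log_le_log (by norm_num) (by norm_num)
  refine ⟨200, by norm_num, β, hβpos, ?_⟩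
  intro x y hx
  set t := |x| with ht
  set r := Real.log t with hr
  have hr0 : 0 < r := Real.log_pos hx
  set f : ℕ → ℝ := fun j => (1 / 3 : ℝ) *
      ‖(1 +
        Complex.exp (2 * Real.pi * Complex.I * ((2 * y / 9 ^ (j + 1) : ℝ) : ℂ)) +
        Complex.exp (2 * Real.pi * Complex.I * (((4 / 9 : ℝ) ^ (j + 1) * x : ℝ) : ℂ)))‖ with hf
  have hf0 : ∀ j, 0 ≤ f j := fun j => by rw [hf]; positivity
  have hf1 : ∀ j, f j ≤ 1 := fun j => factor_le_one _ _
  have hrβpos : 0 < r ^ β := Real.rpow_pos_of_pos hr0 β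
  by_cases hcase : r < 120
  · -- small |x| : the product is at most 1 ≤ 200 r^(-β)
    have h1 : (∏' j, f j) ≤ 1 := by
      simpa using tprod_le_finset_prod f hf0 hf1 ∅
    have hrb : r ^ β ≤ 120 := by
      rcases le_or_gt 1 r with h1r | h1r
      · calc r^β ≤ r^(1:ℝ) := Real.rpow_le_rpow_of_exponent_le h1r hβ1
          _ = r := Real.rpow_one r
          _ ≤ 120 := le_of_lt hcase
      · calc r^β ≤ 1 := Real.rpow_le_one (le_of_lt hr0) (le_of_lt h1r) (le_of_lt hβpos)
          _ ≤ 120 := by norm_num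
    have h2 : (1:ℝ) ≤ 200 * r^(-β) := by
      rw [Real.rpow_neg (le_of_lt hr0)]
      have e : (200:ℝ) * (r^β)⁻¹ = 200 / (r^β) := by ring
      rw [e, le_div_iff₀ hrβpos, one_mul]
      linarith
    calc (∏' j, f j) ≤ 1 := h1
      _ ≤ 200 * r^(-β) := h2
  · -- large |x|
    push_neg at hcase
    set n : ℕ := ⌊Real.logb 2 (r/60)⌋₊ with hn
    have hr60 : (2:ℝ) ≤ r/60 := by linarith
    have hlogbnn : 0 ≤ Real.logb 2 (r/60) := Real.logb_nonneg (by norm_num) (by linarith)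
    have h2n : (2:ℝ)^(n:ℕ) ≤ r/60 := by
      have h1 : (n:ℝ) ≤ Real.logb 2 (r/60) := Nat.floor_le hlogbnn
      calc (2:ℝ)^(n:ℕ) = (2:ℝ)^((n:ℕ):ℝ) := (Real.rpow_natCast 2 n).symm
        _ ≤ (2:ℝ)^(Real.logb 2 (r/60)) := Real.rpow_le_rpow_of_exponent_le one_le_two h1
        _ = r/60 := Real.rpow_logb (by norm_num) (by norm_num) (by linarith)
    have hlog9 : Real.log 9 ≤ 2.5 := by
      have h9 : (9:ℝ) ≤ Real.exp 2.5 := by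
        have h5 : (2.7182818283:ℝ) ≤ Real.exp 1 := le_of_lt Real.exp_one_gt_d9
        have he5 : Real.exp 2.5 * Real.exp 2.5 = Real.exp 5 := by
          rw [← Real.exp_add]; norm_num
        have he5' : Real.exp 5 = (Real.exp 1)^5 := by
          rw [← Real.exp_nat_mul]; norm_num
        have hp5 : (2.7182818283:ℝ)^5 ≤ (Real.exp 1)^5 := by
          apply pow_le_pow_left₀ (by norm_num) h5
        have hbig : (81:ℝ) ≤ Real.exp 5 := by
          rw [he5']
          calc (81:ℝ) ≤ (2.7182818283:ℝ)^5 := by norm_num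
            _ ≤ (Real.exp 1)^5 := hp5
        nlinarith [Real.exp_pos (2.5:ℝ)]
      calc Real.log 9 ≤ Real.log (Real.exp 2.5) := Real.log_le_log (by norm_num) h9
        _ = 2.5 := Real.log_exp _
    have htpos : (0:ℝ) < t := by positivity
    have hi : (9:ℝ)^(ell n) ≤ |bx x 0| := by
      have hbx0 : |bx x 0| = (4/9) * t := by
        unfold bx
        rw [abs_mul, ht]
        norm_num
      rw [hbx0]
      have e1 : (9:ℝ)^(ell n) = Real.exp ((ell n : ℝ) * Real.log 9) := by
        rw [Real.exp_nat_mul (Real.log 9) (ell n)]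
        rw [Real.exp_log (show (0:ℝ) < 9 by norm_num)]
      have e2 : (4/9:ℝ)*t = Real.exp (Real.log (4/9) + r) := by
        rw [Real.exp_add, Real.exp_log (show (0:ℝ) < 4/9 by norm_num), hr,
          Real.exp_log htpos]
      rw [e1, e2]
      apply Real.exp_le_exp.mpr
      have hell : (ell n : ℝ) ≤ 11 * 2^n := ell_le n
      have hlog9nn : 0 ≤ Real.log 9 := Real.log_nonneg (by norm_num)
      have hm1 : (ell n : ℝ) * Real.log 9 ≤ (11 * 2^n) * 2.5 := by
        apply mul_le_mul hell hlog9 hlog9nn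
        positivity
      have hm2 : (11:ℝ) * 2^n * 2.5 ≤ 11 * (r/60) * 2.5 := by
        have : (0:ℝ) ≤ 11 * 2.5 := by norm_num
        nlinarith [h2n]
      have hlog49 : -(5/4 : ℝ) ≤ Real.log (4/9) := by
        rw [show (4/9:ℝ) = ((9/4:ℝ))⁻¹ by norm_num, Real.log_inv]
        have := Real.log_le_sub_one_of_pos (show (0:ℝ) < 9/4 by norm_num)
        linarith
      nlinarith
    obtain ⟨S, hScard, hSgood⟩ := count x n 0 hi
    have hprod : (∏' j, f j) ≤ (99/100:ℝ)^n := by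
      calc (∏' j, f j) ≤ ∏ j ∈ S, f j := tprod_le_finset_prod f hf0 hf1 S
        _ ≤ ∏ j ∈ S, (99/100:ℝ) := by
            apply Finset.prod_le_prod (fun j _ => hf0 j)
            intro j hj
            rw [hf]
            exact factor_le_c _ _ ((hSgood j hj).2)
        _ = (99/100:ℝ)^n := by rw [Finset.prod_const, hScard]
    have hfin : ((99:ℝ)/100)^n ≤ 200 * r^(-β) := by
      have hn2 : Real.logb 2 (r/60) < (n:ℝ) + 1 := Nat.lt_floor_add_one _
      have h3 : Real.log (r/60) < ((n:ℝ)+1) * Real.log 2 := by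
        rw [Real.logb, div_lt_iff₀ hlog2pos] at hn2
        linarith
      have h4 : Real.log (r/60) = Real.log r - Real.log 60 :=
        Real.log_div (ne_of_gt hr0) (by norm_num)
      have h120 : Real.log 120 = Real.log 60 + Real.log 2 := by
        rw [show (120:ℝ) = 60*2 by norm_num, Real.log_mul (by norm_num) (by norm_num)]
      have h5 : Real.log r - Real.log 120 < (n:ℝ) * Real.log 2 := by
        rw [h120]; rw [h4] at h3; linarith
      have hlrnn : Real.log 120 ≤ Real.log r := Real.log_le_log (by norm_num) (by linarith)
      have h6 : β * (Real.log r - Real.log 120) ≤ (n:ℝ) * Real.log (100/99) := by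
        have e : β * (Real.log r - Real.log 120)
            = Real.log (100/99) * ((Real.log r - Real.log 120)/Real.log 2) := by
          rw [hβdef]; ring
        rw [e]
        have hd : (Real.log r - Real.log 120)/Real.log 2 ≤ (n:ℝ) := by
          rw [div_le_iff₀ hlog2pos]
          linarith
        calc Real.log (100/99) * ((Real.log r - Real.log 120)/Real.log 2)
            ≤ Real.log (100/99) * (n:ℝ) := by
              apply mul_le_mul_of_nonneg_left hd (le_of_lt hγpos)
          _ = (n:ℝ) * Real.log (100/99) := by ring
      have h7 : ((99:ℝ)/100)^n = Real.exp (-((n:ℝ) * Real.log (100/99))) := by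
        have e99 : ((99:ℝ)/100) = Real.exp (-(Real.log (100/99))) := by
          rw [← Real.log_inv, Real.exp_log (by norm_num)]
          norm_num
        rw [e99, ← Real.exp_nat_mul]
        congr 1
        ring
      have h8 : r^(-β) = Real.exp (-(β * Real.log r)) := by
        rw [Real.rpow_def_of_pos hr0]
        congr 1
        ring
      have hβ120 : β * Real.log 120 ≤ Real.log 200 := by
        have hl120nn : 0 ≤ Real.log 120 := Real.log_nonneg (by norm_num)
        have h1 : β * Real.log 120 ≤ 1 * Real.log 120 := by
          apply mul_le_mul_of_nonneg_right hβ1 hl120nn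
        have h2 : Real.log 120 ≤ Real.log 200 := Real.log_le_log (by norm_num) (by norm_num)
        linarith
      have hexp : Real.exp (-((n:ℝ) * Real.log (100/99)))
          ≤ Real.exp (Real.log 200 - β * Real.log r) := by
        apply Real.exp_le_exp.mpr
        nlinarith
      have e200 : Real.exp (Real.log 200 - β * Real.log r) = 200 * r^(-β) := by
        rw [Real.exp_sub, Real.exp_log (show (0:ℝ) < 200 by norm_num), h8, Real.exp_neg]
        ring
      rw [h7]
      calc Real.exp (-((n:ℝ) * Real.log (100/99)))
          ≤ Real.exp (Real.log 200 - β * Real.log r) := hexp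
        _ = 200 * r^(-β) := e200
    calc (∏' j, f j) ≤ (99/100:ℝ)^n := hprod
      _ ≤ 200 * r^(-β) := hfin
end
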